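/- arXiv:2204.07518 — 5 statements merged into one kernel-verified Lean document; each statement's English description precedes it below -/
import Mathlib

section
/- Let U be a random variable on a finite set, Y a random variable on a finite set, and Ũ a random variable such that U − Y − Ũ is a Markov chain with p_{Ũ|Y} = p_{U|Y}. Then for any event A ⊆ range(U) and its complement Aᶜ, and any estimator Ê(Y) ∈ {0,1} of the indicator E = 1[U ∈ Aᶜ], we have P[Ê(Y) ≠ E] ≥ P[U ∈ A, Ũ ∈ Aᶜ]. -/
attribute [local instance] Classical.propDecidable

open Finset

section Aux
variable {Ω 𝒰 𝒴 : Type*} [Fintype Ω] [Fintype 𝒰] [Fintype 𝒴]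

/-- Instance-free probability of an event. -/
noncomputable def stmt7Pr (μ : Ω → ℝ) (p : Ω → Prop) : ℝ :=
  ∑ ω, if p ω then μ ω else 0

omit [Fintype 𝒰] [Fintype 𝒴] in
lemma stmt7_filter_eq (μ : Ω → ℝ) (p : Ω → Prop) [DecidablePred p] :
    ∑ ω ∈ univ.filter p, μ ω = stmt7Pr μ p := by
  simp only [Finset.sum_filter, stmt7Pr]
  exact Finset.sum_congr rfl fun ω _ => by by_cases h : p ω <;> simp [h]

omit [Fintype 𝒰] [Fintype 𝒴] in
lemma stmt7_Pr_congr (μ : Ω → ℝ) {p q : Ω → Prop} (h : ∀ ω, p ω ↔ q ω) :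
    stmt7Pr μ p = stmt7Pr μ q :=
  Finset.sum_congr rfl fun ω _ => if_congr (h ω) rfl rfl

omit [Fintype 𝒰] [Fintype 𝒴] in
lemma stmt7_Pr_nonneg (μ : Ω → ℝ) (hμ : ∀ ω, 0 ≤ μ ω) (p : Ω → Prop) :
    0 ≤ stmt7Pr μ p :=
  Finset.sum_nonneg fun ω _ => by by_cases h : p ω <;> simp [h, hμ ω]

omit [Fintype 𝒰] [Fintype 𝒴] in
lemma stmt7_Pr_mono (μ : Ω → ℝ) (hμ : ∀ ω, 0 ≤ μ ω) {p q : Ω → Prop}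
    (h : ∀ ω, p ω → q ω) : stmt7Pr μ p ≤ stmt7Pr μ q := by
  refine Finset.sum_le_sum fun ω _ => ?_
  by_cases hp : p ω
  · simp [hp, h ω hp]
  · by_cases hq : q ω <;> simp [hp, hq, hμ ω]

omit [Fintype 𝒰] in
lemma stmt7_fiber (μ : Ω → ℝ) (Y : Ω → 𝒴) (p : Ω → Prop) :
    stmt7Pr μ p = ∑ y, stmt7Pr μ (fun ω => p ω ∧ Y ω = y) := by
  unfold stmt7Pr
  rw [Finset.sum_comm]
  refine Finset.sum_congr rfl fun ω _ => ?_
  by_cases h : p ω <;> simp [h]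

omit [Fintype 𝒴] in
lemma stmt7_sum_u (μ : Ω → ℝ) (U : Ω → 𝒰) (Y : Ω → 𝒴) (s : Finset 𝒰) (y : 𝒴) :
    ∑ u ∈ s, stmt7Pr μ (fun ω => U ω = u ∧ Y ω = y)
      = stmt7Pr μ (fun ω => U ω ∈ s ∧ Y ω = y) := by
  unfold stmt7Pr
  rw [Finset.sum_comm]
  refine Finset.sum_congr rfl fun ω _ => ?_
  by_cases hy : Y ω = y <;> by_cases hu : U ω ∈ s <;>
    simp [hy, hu, ite_and, Finset.sum_ite_eq, Finset.sum_ite_eq']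

omit [Fintype 𝒴] in
lemma stmt7_sum_uut (μ : Ω → ℝ) (U Ut : Ω → 𝒰) (Y : Ω → 𝒴) [DecidableEq 𝒰]
    (A : Finset 𝒰) (y : 𝒴) :
    ∑ u ∈ A, ∑ ut ∈ Aᶜ, stmt7Pr μ (fun ω => U ω = u ∧ Ut ω = ut ∧ Y ω = y)
      = stmt7Pr μ (fun ω => (U ω ∈ A ∧ Ut ω ∉ A) ∧ Y ω = y) := by
  unfold stmt7Pr
  rw [Finset.sum_congr rfl fun u (_ : u ∈ A) => Finset.sum_comm, Finset.sum_comm]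
  refine Finset.sum_congr rfl fun ω _ => ?_
  by_cases hy : Y ω = y <;> by_cases hu : U ω ∈ A <;> by_cases hut : Ut ω ∈ A <;>
    simp [hy, hu, hut, ite_and, Finset.sum_ite_eq, Finset.sum_ite_eq']

end Aux

/-- If `U − Y − Ũ` is a Markov chain with identical conditionals
(`p_{Ũ|Y} = p_{U|Y}`), then for any event `A` and any estimator `Ê(Y)` of the
indicator `E = 1[U ∈ Aᶜ]`, `P[Ê(Y) ≠ E] ≥ P[U ∈ A, Ũ ∈ Aᶜ]`. -/
theorem stmt7 {Ω 𝒰 𝒴 : Type*} [Fintype Ω] [Fintype 𝒰] [Fintype 𝒴]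
    [DecidableEq 𝒰] [DecidableEq 𝒴]
    (μ : Ω → ℝ) (hμ : ∀ ω, 0 ≤ μ ω) (hμ1 : ∑ ω, μ ω = 1)
    (U Ut : Ω → 𝒰) (Y : Ω → 𝒴)
    (hMarkov : ∀ (y : 𝒴) (u ut : 𝒰),
      (∑ ω ∈ Finset.univ.filter (fun ω => U ω = u ∧ Ut ω = ut ∧ Y ω = y), μ ω) *
        (∑ ω ∈ Finset.univ.filter (fun ω => Y ω = y), μ ω) =
      (∑ ω ∈ Finset.univ.filter (fun ω => U ω = u ∧ Y ω = y), μ ω) *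
        (∑ ω ∈ Finset.univ.filter (fun ω => Ut ω = ut ∧ Y ω = y), μ ω))
    (hsame : ∀ (u : 𝒰) (y : 𝒴),
      (∑ ω ∈ Finset.univ.filter (fun ω => Ut ω = u ∧ Y ω = y), μ ω) =
        ∑ ω ∈ Finset.univ.filter (fun ω => U ω = u ∧ Y ω = y), μ ω)
    (A : Finset 𝒰) (Ehat : 𝒴 → Bool) :
    (∑ ω ∈ Finset.univ.filter (fun ω => U ω ∈ A ∧ Ut ω ∉ A), μ ω) ≤
      ∑ ω ∈ Finset.univ.filter (fun ω => Ehat (Y ω) ≠ decide (U ω ∉ A)), μ ω := by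
  simp only [stmt7_filter_eq] at hMarkov hsame ⊢
  rw [stmt7_fiber μ Y (fun ω => U ω ∈ A ∧ Ut ω ∉ A),
      stmt7_fiber μ Y (fun ω => Ehat (Y ω) ≠ decide (U ω ∉ A))]
  apply Finset.sum_le_sum
  intro y _
  set Py := stmt7Pr μ (fun ω => Y ω = y) with hPydef
  set ay := stmt7Pr μ (fun ω => U ω ∈ A ∧ Y ω = y) with haydef
  set by_ := stmt7Pr μ (fun ω => U ω ∉ A ∧ Y ω = y) with hbydef
  set Ly := stmt7Pr μ (fun ω => (U ω ∈ A ∧ Ut ω ∉ A) ∧ Y ω = y) with hLydef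
  have hay0 : 0 ≤ ay := stmt7_Pr_nonneg μ hμ _
  have hby0 : 0 ≤ by_ := stmt7_Pr_nonneg μ hμ _
  have hPy0 : 0 ≤ Py := stmt7_Pr_nonneg μ hμ _
  have hayP : ay ≤ Py := stmt7_Pr_mono μ hμ fun ω h => h.2
  have hbyP : by_ ≤ Py := stmt7_Pr_mono μ hμ fun ω h => h.2
  have hLyP : Ly ≤ Py := stmt7_Pr_mono μ hμ fun ω h => h.2
  -- the key identity Ly * Py = ay * by_
  have key : Ly * Py = ay * by_ := by
    rw [hLydef, ← stmt7_sum_uut μ U Ut Y A y, Finset.sum_mul]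
    simp only [Finset.sum_mul]
    calc ∑ u ∈ A, ∑ ut ∈ Aᶜ,
          stmt7Pr μ (fun ω => U ω = u ∧ Ut ω = ut ∧ Y ω = y) * Py
        = ∑ u ∈ A, ∑ ut ∈ Aᶜ,
          stmt7Pr μ (fun ω => U ω = u ∧ Y ω = y) *
            stmt7Pr μ (fun ω => Ut ω = ut ∧ Y ω = y) :=
          Finset.sum_congr rfl fun u _ => Finset.sum_congr rfl fun ut _ =>
            hMarkov y u ut
      _ = (∑ u ∈ A, stmt7Pr μ (fun ω => U ω = u ∧ Y ω = y)) *
            (∑ ut ∈ Aᶜ, stmt7Pr μ (fun ω => Ut ω = ut ∧ Y ω = y)) := by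
          rw [Finset.sum_mul_sum]
      _ = ay * by_ := by
          rw [stmt7_sum_u μ U Y A y]
          have h2 : ∑ ut ∈ Aᶜ, stmt7Pr μ (fun ω => Ut ω = ut ∧ Y ω = y)
              = ∑ ut ∈ Aᶜ, stmt7Pr μ (fun ω => U ω = ut ∧ Y ω = y) :=
            Finset.sum_congr rfl fun ut _ => hsame ut y
          rw [h2, stmt7_sum_u μ U Y Aᶜ y]
          congr 1
          exact stmt7_Pr_congr μ fun ω => by simp
  have hLa : Ly ≤ ay := by
    rcases eq_or_lt_of_le hPy0 with hPy | hPy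
    · calc Ly ≤ Py := hLyP
        _ = 0 := hPy.symm
        _ ≤ ay := hay0
    · nlinarith [key, hbyP, hay0]
  have hLb : Ly ≤ by_ := by
    rcases eq_or_lt_of_le hPy0 with hPy | hPy
    · calc Ly ≤ Py := hLyP
        _ = 0 := hPy.symm
        _ ≤ by_ := hby0
    · nlinarith [key, hayP, hby0]
  have hR : stmt7Pr μ (fun ω => (Ehat (Y ω) ≠ decide (U ω ∉ A)) ∧ Y ω = y)
      = if Ehat y = true then ay else by_ := by
    cases hE : Ehat y with
    | true =>
        rw [if_pos rfl, haydef]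
        apply stmt7_Pr_congr
        intro ω
        constructor
        · rintro ⟨h1, h2⟩
          rw [h2, hE] at h1
          refine ⟨?_, h2⟩
          by_contra hc
          simp [hc] at h1
        · rintro ⟨h1, h2⟩
          rw [h2, hE]
          simp [h1]
    | false =>
        rw [if_neg (by simp), hbydef]
        apply stmt7_Pr_congr
        intro ω
        constructor
        · rintro ⟨h1, h2⟩
          rw [h2, hE] at h1
          refine ⟨?_, h2⟩
          by_contra hc
          simp [hc] at h1
        · rintro ⟨h1, h2⟩
          rw [h2, hE]
          simp [h1]
  rw [hR]
  split_ifs with h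
  · exact hLa
  · exact hLb
end

section
/- Reverse hypercontractivity bound for product measures with full support: let p_{VW} be a pmf on a finite set V × W with p_{VW}(v,w) > 0 for all (v,w). Then there exist finite constants α, β ≥ 1 (depending only on p_{VW}) such that for every n and all sets A ⊆ V^n, B ⊆ W^n, P[V^n ∈ A, W^n ∈ B] ≥ P[V^n ∈ A]^α · P[W^n ∈ B]^β, where (V^n, W^n) is i.i.d. with per-symbol law p_{VW}. -/
attribute [local instance] Classical.propDecidable

open Finset

namespace Stmt9Aux

/-- For `t ≥ 0`: `(1+t)^m ≥ 1 + m t + (m(m-1)/2) t²`. -/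
lemma pow_lb_pos (t : ℝ) (ht : 0 ≤ t) : ∀ m : ℕ,
    1 + m * t + ((m : ℝ) * ((m : ℝ) - 1) / 2) * t ^ 2 ≤ (1 + t) ^ m := by
  intro m
  induction m with
  | zero => push_cast; nlinarith
  | succ k ih =>
    have h1 : (0:ℝ) ≤ 1 + t := by linarith
    have h2 := mul_le_mul_of_nonneg_right ih h1
    have hkk : 0 ≤ (k : ℝ) * ((k : ℝ) - 1) := by
      rcases Nat.eq_zero_or_pos k with h | h
      · subst h; norm_num
      · have h1k : (1:ℝ) ≤ (k:ℝ) := by exact_mod_cast h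
        nlinarith
    have h3 : (1 + t) ^ (k + 1) = (1 + t) ^ k * (1 + t) := by ring
    rw [h3]
    refine le_trans ?_ h2
    push_cast
    nlinarith [mul_nonneg hkk (mul_nonneg (mul_nonneg ht ht) ht)]

/-- Pointwise second-order lower bound for `(1+t)^m`, `t ≥ -1`;
quadratic coefficient `m(m-1)/2` on the positive part and `m-1` on the negative part. -/
lemma pow_lb (m : ℕ) (hm : 1 ≤ m) (t : ℝ) (ht : -1 ≤ t) :
    1 + m * t + ((m:ℝ) - 1) * (min t 0) ^ 2
      + ((m : ℝ) * ((m : ℝ) - 1) / 2) * (max t 0) ^ 2 ≤ (1 + t) ^ m := by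
  rcases le_or_gt 0 t with h | h
  · rw [min_eq_right h, max_eq_left h]
    have h2 := pow_lb_pos t h m
    nlinarith [h2]
  · rw [min_eq_left h.le, max_eq_right h.le]
    obtain ⟨k, rfl⟩ := Nat.exists_eq_add_of_le hm
    have hb : 1 + (k:ℝ) * t ≤ (1 + t) ^ k := one_add_mul_le_pow (by linarith) k
    have h1t : (0:ℝ) ≤ 1 + t := by linarith
    have h2 := mul_le_mul_of_nonneg_right hb h1t
    have h3 : (1 + t) ^ (1 + k) = (1 + t) ^ k * (1 + t) := by rw [pow_add]; ring
    rw [h3]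
    push_cast
    nlinarith [h2]

/-- Global quadratic moment lower bound: if `E x = 0`, `x ≥ -1`, atoms of mass `≥ pi0`, then
`E[(1+x)^m] ≥ 1 + (pi0 m (m-1)/4) E[x²]`. -/
lemma moment_lb {V : Type*} [Fintype V] [Nonempty V]
    (π : V → ℝ) (hπpos : ∀ v, 0 < π v) (hπ1 : ∑ v, π v = 1)
    (pi0 : ℝ) (hpi00 : 0 < pi0) (hpi0 : ∀ v, pi0 ≤ π v)
    (m : ℕ) (hm : 2 ≤ m) (x : V → ℝ) (hx1 : ∀ v, -1 ≤ x v)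
    (hx0 : ∑ v, π v * x v = 0) :
    1 + (pi0 * m * ((m:ℝ) - 1) / 4) * (∑ v, π v * x v ^ 2)
      ≤ ∑ v, π v * (1 + x v) ^ m := by
  classical
  have hm1 : (1:ℝ) ≤ (m:ℝ) := by exact_mod_cast le_trans one_le_two hm
  set C2 : ℝ := (m:ℝ) * ((m:ℝ) - 1) / 2 with hC2
  have hC2nn : 0 ≤ C2 := by rw [hC2]; nlinarith
  set Vp : ℝ := ∑ v, π v * (max (x v) 0) ^ 2 with hVpdef
  set Vm : ℝ := ∑ v, π v * (min (x v) 0) ^ 2 with hVmdef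
  have hVp0 : 0 ≤ Vp := sum_nonneg fun v _ => mul_nonneg (hπpos v).le (sq_nonneg _)
  have hVm0 : 0 ≤ Vm := sum_nonneg fun v _ => mul_nonneg (hπpos v).le (sq_nonneg _)
  have hsplit : ∑ v, π v * x v ^ 2 = Vm + Vp := by
    rw [hVmdef, hVpdef, ← sum_add_distrib]
    refine sum_congr rfl fun v _ => ?_
    rcases le_or_gt 0 (x v) with h | h
    · rw [min_eq_right h, max_eq_left h]; ring
    · rw [min_eq_left h.le, max_eq_right h.le]; ring
  -- Step 1: pointwise bound and summation
  have hstep1 : 1 + ((m:ℝ) - 1) * Vm + C2 * Vp ≤ ∑ v, π v * (1 + x v) ^ m := by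
    have key : ∑ v, π v * (1 + m * x v + ((m:ℝ) - 1) * (min (x v) 0) ^ 2
        + C2 * (max (x v) 0) ^ 2)
        = (∑ v, π v) + (m:ℝ) * (∑ v, π v * x v)
          + ((m:ℝ) - 1) * Vm + C2 * Vp := by
      rw [hVmdef, hVpdef, mul_sum, mul_sum, mul_sum, ← sum_add_distrib, ← sum_add_distrib,
        ← sum_add_distrib]
      exact sum_congr rfl fun v _ => by ring
    have hle : ∑ v, π v * (1 + m * x v + ((m:ℝ) - 1) * (min (x v) 0) ^ 2
        + C2 * (max (x v) 0) ^ 2) ≤ ∑ v, π v * (1 + x v) ^ m := by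
      refine sum_le_sum fun v _ => ?_
      exact mul_le_mul_of_nonneg_left
        (pow_lb m (le_trans one_le_two hm) (x v) (hx1 v)) (hπpos v).le
    rw [key, hπ1, hx0] at hle
    linarith
  -- Step 2: pi0 * Vm ≤ Vp
  have hVmVp : pi0 * Vm ≤ Vp := by
    set nn : V → ℝ := fun v => max (-(x v)) 0 with hnn
    set pp : V → ℝ := fun v => max (x v) 0 with hpp
    have hnn0 : ∀ v, 0 ≤ nn v := fun v => le_max_right _ _
    have hpp0 : ∀ v, 0 ≤ pp v := fun v => le_max_right _ _
    have hnsq : ∀ v, (min (x v) 0) ^ 2 = nn v ^ 2 := by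
      intro v
      rcases le_or_gt 0 (x v) with h | h
      · rw [min_eq_right h]; simp only [hnn]
        rw [max_eq_right (by linarith : -(x v) ≤ 0)]
      · rw [min_eq_left h.le]; simp only [hnn]
        rw [max_eq_left (by linarith : (0:ℝ) ≤ -(x v))]; ring
    have hxs : ∀ v, x v = pp v - nn v := by
      intro v
      rcases le_or_gt 0 (x v) with h | h
      · simp only [hpp, hnn]
        rw [max_eq_left h, max_eq_right (by linarith : -(x v) ≤ 0)]; ring
      · simp only [hpp, hnn]
        rw [max_eq_right h.le, max_eq_left (by linarith : (0:ℝ) ≤ -(x v))]; ring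
    have hPN : ∑ v, π v * pp v = ∑ v, π v * nn v := by
      have e : ∑ v, π v * x v = (∑ v, π v * pp v) - ∑ v, π v * nn v := by
        rw [← sum_sub_distrib]
        exact sum_congr rfl fun v _ => by rw [hxs v]; ring
      rw [hx0] at e; linarith
    obtain ⟨v0, -, hv0⟩ := Finset.exists_max_image (univ : Finset V) nn univ_nonempty
    have hVm_eq : Vm = ∑ v, π v * nn v ^ 2 := by
      rw [hVmdef]; exact sum_congr rfl fun v _ => by rw [hnsq v]
    have h1 : Vm ≤ nn v0 * ∑ v, π v * nn v := by
      rw [hVm_eq, mul_sum]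
      refine sum_le_sum fun v _ => ?_
      have h := hv0 v (mem_univ v)
      have h2 := hnn0 v
      have h3 := (hπpos v).le
      calc π v * nn v ^ 2 = (π v * nn v) * nn v := by ring
        _ ≤ (π v * nn v) * nn v0 := mul_le_mul_of_nonneg_left h (mul_nonneg h3 h2)
        _ = nn v0 * (π v * nn v) := by ring
    have h2 : pi0 * nn v0 ^ 2 ≤ Vm := by
      rw [hVm_eq]
      calc pi0 * nn v0 ^ 2 ≤ π v0 * nn v0 ^ 2 :=
            mul_le_mul_of_nonneg_right (hpi0 v0) (sq_nonneg _)
        _ ≤ ∑ v, π v * nn v ^ 2 :=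
            Finset.single_le_sum (fun v _ => mul_nonneg (hπpos v).le (sq_nonneg _)) (mem_univ v0)
    have hCS : (∑ v, π v * pp v) ^ 2 ≤ Vp := by
      have h := Finset.sum_mul_sq_le_sq_mul_sq univ (fun v => Real.sqrt (π v))
        (fun v => Real.sqrt (π v) * pp v)
      have e1 : ∑ v, Real.sqrt (π v) * (Real.sqrt (π v) * pp v) = ∑ v, π v * pp v :=
        sum_congr rfl fun v _ => by rw [← mul_assoc, Real.mul_self_sqrt (hπpos v).le]
      have e2 : ∑ v, Real.sqrt (π v) ^ 2 = 1 := by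
        rw [← hπ1]; exact sum_congr rfl fun v _ => Real.sq_sqrt (hπpos v).le
      have e3 : ∑ v, (Real.sqrt (π v) * pp v) ^ 2 = Vp := by
        rw [hVpdef]
        refine sum_congr rfl fun v _ => ?_
        rw [mul_pow, Real.sq_sqrt (hπpos v).le]
      rw [e1, e2, e3, one_mul] at h
      exact h
    rcases eq_or_lt_of_le hVm0 with h0 | h0
    · rw [← h0, mul_zero]; exact hVp0
    · have hSnn : 0 ≤ ∑ v, π v * nn v :=
        sum_nonneg fun v _ => mul_nonneg (hπpos v).le (hnn0 v)
      have hA : Vm ^ 2 ≤ (nn v0 * ∑ v, π v * nn v) ^ 2 := pow_le_pow_left₀ hVm0 h1 2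
      have hB : pi0 * (nn v0 * ∑ v, π v * nn v) ^ 2 ≤ Vm * Vp := by
        have e : pi0 * (nn v0 * ∑ v, π v * nn v) ^ 2
            = (pi0 * nn v0 ^ 2) * (∑ v, π v * pp v) ^ 2 := by rw [hPN]; ring
        rw [e]
        exact mul_le_mul h2 hCS (sq_nonneg _) hVm0
      have hfin : pi0 * Vm ^ 2 ≤ Vm * Vp :=
        le_trans (mul_le_mul_of_nonneg_left hA hpi00.le) hB
      have hfin2 : (pi0 * Vm) * Vm ≤ Vp * Vm := by
        calc (pi0 * Vm) * Vm = pi0 * Vm ^ 2 := by ring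
          _ ≤ Vm * Vp := hfin
          _ = Vp * Vm := by ring
      exact le_of_mul_le_mul_right hfin2 h0
  have hpi01 : pi0 ≤ 1 := by
    have v := Classical.arbitrary V
    have h := Finset.single_le_sum (fun v (_ : v ∈ univ) => (hπpos v).le) (mem_univ v)
    rw [hπ1] at h
    linarith [hpi0 v]
  rw [hsplit]
  have key1 : pi0 * C2 / 2 * Vm ≤ C2 / 2 * Vp := by
    have h := mul_le_mul_of_nonneg_left hVmVp (show (0:ℝ) ≤ C2 / 2 by linarith)
    calc pi0 * C2 / 2 * Vm = C2 / 2 * (pi0 * Vm) := by ring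
      _ ≤ C2 / 2 * Vp := h
  have key2 : pi0 * C2 / 2 * Vp ≤ C2 / 2 * Vp := by
    have h1 : pi0 * C2 / 2 ≤ C2 / 2 := by nlinarith
    exact mul_le_mul_of_nonneg_right h1 hVp0
  have hmV : 0 ≤ ((m:ℝ) - 1) * Vm := mul_nonneg (by linarith) hVm0
  have heq : pi0 * (m:ℝ) * ((m:ℝ) - 1) / 4 = pi0 * C2 / 2 := by rw [hC2]; ring
  rw [heq]
  have hdist : pi0 * C2 / 2 * (Vm + Vp) = pi0 * C2 / 2 * Vm + pi0 * C2 / 2 * Vp := by ring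
  linarith [hstep1, key1, key2, hmV, hdist.le, hdist.ge]

set_option maxHeartbeats 1600000 in
/-- Single-letter reverse hypercontractivity, normalized form. -/
lemma core_single {V W : Type*} [Fintype V] [Fintype W] [Nonempty V] [Nonempty W]
    (p : V × W → ℝ) (π : V → ℝ) (q : W → ℝ) (lam pi0 : ℝ) (m : ℕ)
    (hp : ∀ vw, 0 < p vw) (hπ : ∀ v, π v = ∑ w, p (v, w)) (hq : ∀ w, q w = ∑ v, p (v, w))
    (hsum : ∑ vw, p vw = 1)
    (hlam0 : 0 < lam) (hlam : ∀ vw, lam * (π vw.1 * q vw.2) ≤ p vw)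
    (hpi00 : 0 < pi0) (hpi0V : ∀ v, pi0 ≤ π v) (hpi0W : ∀ w, pi0 ≤ q w)
    (hm : 2 ≤ m) (hkey : 2 ≤ lam * pi0 * ((m:ℝ) - 1))
    (φ : V → ℝ) (ψ : W → ℝ) (hφ : ∀ v, 0 ≤ φ v) (hψ : ∀ w, 0 ≤ ψ w)
    (hφ1 : ∑ v, π v * φ v = 1) (hψ1 : ∑ w, q w * ψ w = 1) :
    1 ≤ ∑ vw, p vw * (φ vw.1 ^ m * ψ vw.2 ^ m) := by
  classical
  have hm1 : (1:ℝ) ≤ (m:ℝ) := by exact_mod_cast le_trans one_le_two hm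
  have hm2 : (2:ℝ) ≤ (m:ℝ) := by exact_mod_cast hm
  have hπpos : ∀ v, 0 < π v := fun v => by
    rw [hπ]; exact sum_pos (fun w _ => hp (v, w)) univ_nonempty
  have hqpos : ∀ w, 0 < q w := fun w => by
    rw [hq]; exact sum_pos (fun v _ => hp (v, w)) univ_nonempty
  have hπ1 : ∑ v, π v = 1 := by
    rw [← hsum, Fintype.sum_prod_type]
    exact sum_congr rfl fun v _ => hπ v
  have hq1 : ∑ w, q w = 1 := by
    rw [← hsum, Fintype.sum_prod_type_right]
    exact sum_congr rfl fun w _ => hq w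
  have hπq1 : ∑ vw : V × W, π vw.1 * q vw.2 = 1 := by
    rw [Fintype.sum_prod_type]
    calc ∑ v, ∑ w, π v * q w = ∑ v, π v * ∑ w, q w := by
          exact sum_congr rfl fun v _ => (mul_sum _ _ _).symm
      _ = 1 := by rw [hq1]; simp [hπ1]
  have hlam1 : lam ≤ 1 := by
    have h : lam * (∑ vw : V × W, π vw.1 * q vw.2) ≤ ∑ vw, p vw := by
      rw [mul_sum]
      exact sum_le_sum fun vw _ => hlam vw
    rw [hπq1, hsum, mul_one] at h
    exact h
  -- deviations
  set x : V → ℝ := fun v => φ v - 1 with hx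
  set y : W → ℝ := fun w => ψ w - 1 with hy
  have hx1 : ∀ v, -1 ≤ x v := fun v => by simp only [hx]; linarith [hφ v]
  have hy1 : ∀ w, -1 ≤ y w := fun w => by simp only [hy]; linarith [hψ w]
  have hx0 : ∑ v, π v * x v = 0 := by
    simp only [hx, mul_sub, mul_one]
    rw [sum_sub_distrib, hφ1, hπ1]
    ring
  have hy0 : ∑ w, q w * y w = 0 := by
    simp only [hy, mul_sub, mul_one]
    rw [sum_sub_distrib, hψ1, hq1]
    ring
  set Vf : ℝ := ∑ v, π v * x v ^ 2 with hVf
  set Vg : ℝ := ∑ w, q w * y w ^ 2 with hVg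
  have hVf0 : 0 ≤ Vf := sum_nonneg fun v _ => mul_nonneg (hπpos v).le (sq_nonneg _)
  have hVg0 : 0 ≤ Vg := sum_nonneg fun w _ => mul_nonneg (hqpos w).le (sq_nonneg _)
  set sig : ℝ := Real.sqrt (Vf * Vg) with hsig
  have hsig0 : 0 ≤ sig := Real.sqrt_nonneg _
  have hsig2 : sig ^ 2 = Vf * Vg := Real.sq_sqrt (mul_nonneg hVf0 hVg0)
  have hsigle : 2 * sig ≤ Vf + Vg := by
    have h1 : sig = Real.sqrt Vf * Real.sqrt Vg := by
      rw [hsig, Real.sqrt_mul hVf0]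
    have h2 : 2 * (Real.sqrt Vf * Real.sqrt Vg) ≤ Real.sqrt Vf ^ 2 + Real.sqrt Vg ^ 2 := by
      nlinarith only [sq_nonneg (Real.sqrt Vf - Real.sqrt Vg)]
    rw [Real.sq_sqrt hVf0, Real.sq_sqrt hVg0] at h2
    rw [h1]
    linarith
  set gam : ℝ := pi0 * m * ((m:ℝ) - 1) / 4 with hgam
  have hgam0 : 0 ≤ gam := by
    rw [hgam]
    have : (0:ℝ) ≤ (m:ℝ) - 1 := by linarith
    positivity
  -- moment bounds
  have hMφ : 1 + gam * Vf ≤ ∑ v, π v * φ v ^ m := by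
    have h := moment_lb π hπpos hπ1 pi0 hpi00 hpi0V m hm x hx1 hx0
    rw [← hgam, ← hVf] at h
    have e : ∀ v, (1 + x v) = φ v := fun v => by simp only [hx]; ring
    calc 1 + gam * Vf ≤ ∑ v, π v * (1 + x v) ^ m := h
      _ = ∑ v, π v * φ v ^ m := sum_congr rfl fun v _ => by rw [e v]
  have hMψ : 1 + gam * Vg ≤ ∑ w, q w * ψ w ^ m := by
    have h := moment_lb q hqpos hq1 pi0 hpi00 hpi0W m hm y hy1 hy0
    rw [← hgam, ← hVg] at h
    have e : ∀ w, (1 + y w) = ψ w := fun w => by simp only [hy]; ring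
    calc 1 + gam * Vg ≤ ∑ w, q w * (1 + y w) ^ m := h
      _ = ∑ w, q w * ψ w ^ m := sum_congr rfl fun w _ => by rw [e w]
  clear_value x y Vf Vg sig gam
  -- residual coupling
  set c : V × W → ℝ := fun vw => p vw - lam * (π vw.1 * q vw.2) with hc
  have hc0 : ∀ vw, 0 ≤ c vw := fun vw => by simp only [hc]; linarith [hlam vw]
  clear_value c
  have hcsum : ∑ vw, c vw = 1 - lam := by
    simp only [hc]
    rw [sum_sub_distrib, hsum, ← mul_sum, hπq1, mul_one]
  have hcrow : ∀ v, ∑ w, c (v, w) = (1 - lam) * π v := by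
    intro v
    simp only [hc]
    rw [sum_sub_distrib, ← hπ v]
    have : ∑ w, lam * (π v * q w) = lam * π v := by
      rw [← mul_sum, ← mul_sum, hq1, mul_one]
    rw [this]; ring
  have hccol : ∀ w, ∑ v, c (v, w) = (1 - lam) * q w := by
    intro w
    simp only [hc]
    rw [sum_sub_distrib, ← hq w]
    have : ∑ v, lam * (π v * q w) = lam * q w := by
      calc ∑ v, lam * (π v * q w) = (∑ v, π v) * (lam * q w) := by
            rw [sum_mul]; exact sum_congr rfl fun v _ => by ring
        _ = lam * q w := by rw [hπ1, one_mul]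
    rw [this]; ring
  -- sum of c x, c y vanish; covariance bound
  have hcx : ∑ vw : V × W, c vw * x vw.1 = 0 := by
    rw [Fintype.sum_prod_type]
    calc ∑ v, ∑ w, c (v, w) * x v = ∑ v, (1 - lam) * π v * x v := by
          refine sum_congr rfl fun v _ => ?_
          rw [← sum_mul, hcrow v]
      _ = (1 - lam) * ∑ v, π v * x v := by rw [mul_sum]; exact sum_congr rfl fun v _ => by ring
      _ = 0 := by rw [hx0, mul_zero]
  have hcy : ∑ vw : V × W, c vw * y vw.2 = 0 := by
    rw [Fintype.sum_prod_type_right]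
    calc ∑ w, ∑ v, c (v, w) * y w = ∑ w, (1 - lam) * q w * y w := by
          refine sum_congr rfl fun w _ => ?_
          rw [← sum_mul, hccol w]
      _ = (1 - lam) * ∑ w, q w * y w := by rw [mul_sum]; exact sum_congr rfl fun w _ => by ring
      _ = 0 := by rw [hy0, mul_zero]
  have hcx2 : ∑ vw : V × W, c vw * x vw.1 ^ 2 = (1 - lam) * Vf := by
    rw [Fintype.sum_prod_type, hVf, mul_sum]
    refine sum_congr rfl fun v _ => ?_
    have e : ∑ w, c (v, w) * x (v, w).1 ^ 2 = (∑ w, c (v, w)) * x v ^ 2 := by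
      rw [sum_mul]
    rw [e, hcrow v]; ring
  have hcy2 : ∑ vw : V × W, c vw * y vw.2 ^ 2 = (1 - lam) * Vg := by
    rw [Fintype.sum_prod_type_right, hVg, mul_sum]
    refine sum_congr rfl fun w _ => ?_
    have e : ∑ v, c (v, w) * y (v, w).2 ^ 2 = (∑ v, c (v, w)) * y w ^ 2 := by
      rw [sum_mul]
    rw [e, hccol w]; ring
  have hcov : -((1 - lam) * sig) ≤ ∑ vw : V × W, c vw * (x vw.1 * y vw.2) := by
    have hCS := Finset.sum_mul_sq_le_sq_mul_sq univ
      (fun vw : V × W => Real.sqrt (c vw) * x vw.1)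
      (fun vw : V × W => Real.sqrt (c vw) * y vw.2)
    have e1 : ∑ vw : V × W, (Real.sqrt (c vw) * x vw.1) * (Real.sqrt (c vw) * y vw.2)
        = ∑ vw : V × W, c vw * (x vw.1 * y vw.2) := by
      refine sum_congr rfl fun vw _ => ?_
      have : Real.sqrt (c vw) * Real.sqrt (c vw) = c vw := Real.mul_self_sqrt (hc0 vw)
      calc (Real.sqrt (c vw) * x vw.1) * (Real.sqrt (c vw) * y vw.2)
          = (Real.sqrt (c vw) * Real.sqrt (c vw)) * (x vw.1 * y vw.2) := by ring
        _ = c vw * (x vw.1 * y vw.2) := by rw [this]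
    have e2 : ∑ vw : V × W, (Real.sqrt (c vw) * x vw.1) ^ 2 = (1 - lam) * Vf := by
      rw [← hcx2]
      refine sum_congr rfl fun vw _ => ?_
      rw [mul_pow, Real.sq_sqrt (hc0 vw)]
    have e3 : ∑ vw : V × W, (Real.sqrt (c vw) * y vw.2) ^ 2 = (1 - lam) * Vg := by
      rw [← hcy2]
      refine sum_congr rfl fun vw _ => ?_
      rw [mul_pow, Real.sq_sqrt (hc0 vw)]
    rw [e1, e2, e3] at hCS
    set S : ℝ := ∑ vw : V × W, c vw * (x vw.1 * y vw.2) with hS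
    clear_value S
    have hK : ((1 - lam) * sig) ^ 2 = ((1 - lam) * Vf) * ((1 - lam) * Vg) := by
      have e : ((1 - lam) * sig) ^ 2 = (1 - lam) ^ 2 * sig ^ 2 := by ring
      rw [e, hsig2]; ring
    have hKnn : 0 ≤ (1 - lam) * sig := mul_nonneg (by linarith) hsig0
    have hCS' : S ^ 2 ≤ ((1 - lam) * sig) ^ 2 := by rw [hK]; exact hCS
    have h1 : |S| ≤ (1 - lam) * sig := by
      have h2 := Real.sqrt_le_sqrt hCS'
      rw [Real.sqrt_sq_eq_abs, Real.sqrt_sq hKnn] at h2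
      exact h2
    linarith only [neg_abs_le S, h1]
  -- lower bound on the c-part
  have hcpart : (1 - lam) * (1 - m * sig) ≤ ∑ vw, c vw * (φ vw.1 ^ m * ψ vw.2 ^ m) := by
    have hZnn : 0 ≤ ∑ vw, c vw * (φ vw.1 ^ m * ψ vw.2 ^ m) :=
      sum_nonneg fun vw _ => mul_nonneg (hc0 vw)
        (mul_nonneg (pow_nonneg (hφ _) m) (pow_nonneg (hψ _) m))
    rcases le_or_gt 1 ((m:ℝ) * sig) with hms | hms
    · have : (1 - lam) * (1 - (m:ℝ) * sig) ≤ 0 :=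
        mul_nonpos_of_nonneg_of_nonpos (by linarith) (by linarith)
      linarith
    · -- m * sig < 1, so sig < 1
      have hsig1 : sig < 1 := by nlinarith
      rcases eq_or_lt_of_le hlam1 with hl1 | hl1
      · -- lam = 1
        rw [← hl1]; simp only [sub_self, zero_mul]; exact hZnn
      · have h1l : 0 < 1 - lam := by linarith
        -- Jensen with weights c/(1-lam)
        set r : V × W → ℝ := fun vw => c vw / (1 - lam) with hr
        have hr0 : ∀ vw, 0 ≤ r vw := fun vw => div_nonneg (hc0 vw) h1l.le
        clear_value r
        have hr1 : ∑ vw : V × W, r vw = 1 := by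
          simp only [hr]
          rw [← sum_div, hcsum, div_self (ne_of_gt h1l)]
        have hJ := (convexOn_pow m).map_sum_le (t := (univ : Finset (V × W))) (w := r)
          (p := fun vw => φ vw.1 * ψ vw.2) (fun vw _ => hr0 vw) hr1
          (fun vw _ => Set.mem_Ici.mpr (mul_nonneg (hφ _) (hψ _)))
        simp only [smul_eq_mul] at hJ
        -- hJ : (∑ r * (φψ))^m ≤ ∑ r * (φψ)^m
        have hT : (1 - lam) * (1 - sig) ≤ ∑ vw : V × W, c vw * (φ vw.1 * ψ vw.2) := by
          have e : ∑ vw : V × W, c vw * (φ vw.1 * ψ vw.2)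
              = (∑ vw, c vw) + (∑ vw : V × W, c vw * x vw.1)
                + (∑ vw : V × W, c vw * y vw.2) + ∑ vw : V × W, c vw * (x vw.1 * y vw.2) := by
            rw [← sum_add_distrib, ← sum_add_distrib, ← sum_add_distrib]
            refine sum_congr rfl fun vw _ => ?_
            have ex : φ vw.1 = 1 + x vw.1 := by simp only [hx]; ring
            have ey : ψ vw.2 = 1 + y vw.2 := by simp only [hy]; ring
            rw [ex, ey]; ring
          rw [e, hcsum, hcx, hcy]
          nlinarith only [hcov, hsig0]
        have hTr : 1 - sig ≤ ∑ vw : V × W, r vw * (φ vw.1 * ψ vw.2) := by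
          have e : ∑ vw : V × W, r vw * (φ vw.1 * ψ vw.2)
              = (∑ vw : V × W, c vw * (φ vw.1 * ψ vw.2)) / (1 - lam) := by
            rw [sum_div]
            exact sum_congr rfl fun vw _ => by simp only [hr]; ring
          rw [e, le_div_iff₀ h1l]
          calc (1 - sig) * (1 - lam) = (1 - lam) * (1 - sig) := by ring
            _ ≤ _ := hT
        have hpowle : (1 - sig) ^ m ≤ ∑ vw : V × W, r vw * (φ vw.1 * ψ vw.2) ^ m := by
          calc (1 - sig) ^ m ≤ (∑ vw : V × W, r vw * (φ vw.1 * ψ vw.2)) ^ m :=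
                pow_le_pow_left₀ (by linarith) hTr m
            _ ≤ _ := hJ
        have hBern : 1 - (m:ℝ) * sig ≤ (1 - sig) ^ m := by
          have h := one_add_mul_le_pow (show (-2:ℝ) ≤ -sig by linarith) m
          calc 1 - (m:ℝ) * sig = 1 + (m:ℝ) * (-sig) := by ring
            _ ≤ (1 + -sig) ^ m := h
            _ = (1 - sig) ^ m := by ring_nf
        have hfin : (1 - lam) * (1 - (m:ℝ) * sig)
            ≤ (1 - lam) * ∑ vw : V × W, r vw * (φ vw.1 * ψ vw.2) ^ m :=
          mul_le_mul_of_nonneg_left (le_trans hBern hpowle) h1l.le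
        have e2 : (1 - lam) * ∑ vw : V × W, r vw * (φ vw.1 * ψ vw.2) ^ m
            = ∑ vw, c vw * (φ vw.1 ^ m * ψ vw.2 ^ m) := by
          rw [mul_sum]
          refine sum_congr rfl fun vw _ => ?_
          simp only [hr]
          rw [mul_pow]
          field_simp
        rw [e2] at hfin
        exact hfin
  -- put everything together
  have hsplit : ∑ vw, p vw * (φ vw.1 ^ m * ψ vw.2 ^ m)
      = lam * ((∑ v, π v * φ v ^ m) * (∑ w, q w * ψ w ^ m))
        + ∑ vw, c vw * (φ vw.1 ^ m * ψ vw.2 ^ m) := by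
    have e1 : (∑ v, π v * φ v ^ m) * (∑ w, q w * ψ w ^ m)
        = ∑ vw : V × W, (π vw.1 * q vw.2) * (φ vw.1 ^ m * ψ vw.2 ^ m) := by
      rw [Fintype.sum_prod_type, sum_mul]
      refine sum_congr rfl fun v _ => ?_
      rw [mul_sum]
      exact sum_congr rfl fun w _ => by ring
    rw [e1, mul_sum, ← sum_add_distrib]
    refine sum_congr rfl fun vw _ => ?_
    simp only [hc]
    ring
  have hMprod : (1 + gam * Vf) * (1 + gam * Vg)
      ≤ (∑ v, π v * φ v ^ m) * (∑ w, q w * ψ w ^ m) := by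
    have h1 : 0 ≤ 1 + gam * Vf := by positivity
    exact mul_le_mul hMφ hMψ (by positivity) (le_trans h1 hMφ)
  rw [hsplit]
  have hscalar : 1 ≤ lam * ((1 + gam * Vf) * (1 + gam * Vg)) + (1 - lam) * (1 - m * sig) := by
    have hgsum : (1 - lam) * (m:ℝ) * sig ≤ lam * gam * (Vf + Vg) := by
      have h1 : (1 - lam) * (m:ℝ) ≤ 2 * (lam * gam) := by
        have e : 2 * (lam * gam) = lam * pi0 * ((m:ℝ) - 1) * (m:ℝ) / 2 := by rw [hgam]; ring
        rw [e]
        have hm0 : (0:ℝ) ≤ (m:ℝ) := by linarith only [hm1]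
        have h2 : (1 - lam) * (m:ℝ) ≤ (m:ℝ) := by
          nlinarith only [mul_nonneg hlam0.le hm0]
        have h4 := mul_le_mul_of_nonneg_right hkey hm0
        have h3 : (m:ℝ) ≤ lam * pi0 * ((m:ℝ) - 1) * (m:ℝ) / 2 := by linarith
        linarith
      calc (1 - lam) * (m:ℝ) * sig ≤ (2 * (lam * gam)) * sig :=
            mul_le_mul_of_nonneg_right h1 hsig0
        _ = (lam * gam) * (2 * sig) := by ring
        _ ≤ (lam * gam) * (Vf + Vg) :=
            mul_le_mul_of_nonneg_left hsigle (mul_nonneg hlam0.le hgam0)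
        _ = lam * gam * (Vf + Vg) := by ring
    nlinarith only [hgsum, mul_nonneg (mul_nonneg hlam0.le (mul_nonneg hgam0 hgam0))
        (mul_nonneg hVf0 hVg0)]
  calc (1:ℝ) ≤ lam * ((1 + gam * Vf) * (1 + gam * Vg)) + (1 - lam) * (1 - m * sig) := hscalar
    _ ≤ lam * ((∑ v, π v * φ v ^ m) * (∑ w, q w * ψ w ^ m))
        + ∑ vw, c vw * (φ vw.1 ^ m * ψ vw.2 ^ m) := by
      have h5 := mul_le_mul_of_nonneg_left hMprod hlam0.le
      linarith only [h5, hcpart]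

/-- Single-letter reverse hypercontractivity, homogeneous form. -/
lemma single_letter {V W : Type*} [Fintype V] [Fintype W] [Nonempty V] [Nonempty W]
    (p : V × W → ℝ) (π : V → ℝ) (q : W → ℝ) (lam pi0 : ℝ) (m : ℕ)
    (hp : ∀ vw, 0 < p vw) (hπ : ∀ v, π v = ∑ w, p (v, w)) (hq : ∀ w, q w = ∑ v, p (v, w))
    (hsum : ∑ vw, p vw = 1)
    (hlam0 : 0 < lam) (hlam : ∀ vw, lam * (π vw.1 * q vw.2) ≤ p vw)
    (hpi00 : 0 < pi0) (hpi0V : ∀ v, pi0 ≤ π v) (hpi0W : ∀ w, pi0 ≤ q w)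
    (hm : 2 ≤ m) (hkey : 2 ≤ lam * pi0 * ((m:ℝ) - 1))
    (φ : V → ℝ) (ψ : W → ℝ) (hφ : ∀ v, 0 ≤ φ v) (hψ : ∀ w, 0 ≤ ψ w) :
    (∑ v, π v * φ v) ^ m * (∑ w, q w * ψ w) ^ m
      ≤ ∑ vw, p vw * (φ vw.1 ^ m * ψ vw.2 ^ m) := by
  classical
  have hπpos : ∀ v, 0 < π v := fun v => by
    rw [hπ]; exact sum_pos (fun w _ => hp (v, w)) univ_nonempty
  have hqpos : ∀ w, 0 < q w := fun w => by
    rw [hq]; exact sum_pos (fun v _ => hp (v, w)) univ_nonempty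
  have hm0 : m ≠ 0 := by omega
  have hRnn : 0 ≤ ∑ vw, p vw * (φ vw.1 ^ m * ψ vw.2 ^ m) :=
    sum_nonneg fun vw _ => mul_nonneg (hp vw).le
      (mul_nonneg (pow_nonneg (hφ _) m) (pow_nonneg (hψ _) m))
  set Sφ : ℝ := ∑ v, π v * φ v with hSφ
  set Sψ : ℝ := ∑ w, q w * ψ w with hSψ
  have hSφ0 : 0 ≤ Sφ := sum_nonneg fun v _ => mul_nonneg (hπpos v).le (hφ v)
  have hSψ0 : 0 ≤ Sψ := sum_nonneg fun w _ => mul_nonneg (hqpos w).le (hψ w)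
  rcases eq_or_lt_of_le hSφ0 with h0 | h0
  · rw [← h0, zero_pow hm0, zero_mul]; exact hRnn
  rcases eq_or_lt_of_le hSψ0 with h1 | h1
  · rw [← h1, zero_pow hm0, mul_zero]; exact hRnn
  have hcore := core_single p π q lam pi0 m hp hπ hq hsum hlam0 hlam hpi00 hpi0V hpi0W hm hkey
    (fun v => φ v / Sφ) (fun w => ψ w / Sψ)
    (fun v => div_nonneg (hφ v) hSφ0) (fun w => div_nonneg (hψ w) hSψ0)
    (by
      show ∑ v, π v * (φ v / Sφ) = 1
      have e : ∑ v, π v * (φ v / Sφ) = (∑ v, π v * φ v) / Sφ := by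
        rw [sum_div]
        exact sum_congr rfl fun v _ => (mul_div_assoc _ _ _).symm
      rw [e, ← hSφ, div_self (ne_of_gt h0)])
    (by
      show ∑ w, q w * (ψ w / Sψ) = 1
      have e : ∑ w, q w * (ψ w / Sψ) = (∑ w, q w * ψ w) / Sψ := by
        rw [sum_div]
        exact sum_congr rfl fun w _ => (mul_div_assoc _ _ _).symm
      rw [e, ← hSψ, div_self (ne_of_gt h1)])
  have e : ∑ vw, p vw * ((φ vw.1 / Sφ) ^ m * (ψ vw.2 / Sψ) ^ m)
      = (∑ vw, p vw * (φ vw.1 ^ m * ψ vw.2 ^ m)) / (Sφ ^ m * Sψ ^ m) := by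
    rw [sum_div]
    refine sum_congr rfl fun vw _ => ?_
    rw [div_pow, div_pow]
    field_simp
  rw [e] at hcore
  have hD : 0 < Sφ ^ m * Sψ ^ m := mul_pos (pow_pos h0 m) (pow_pos h1 m)
  calc Sφ ^ m * Sψ ^ m = Sφ ^ m * Sψ ^ m * 1 := by ring
    _ ≤ Sφ ^ m * Sψ ^ m * ((∑ vw, p vw * (φ vw.1 ^ m * ψ vw.2 ^ m)) / (Sφ ^ m * Sψ ^ m)) :=
        mul_le_mul_of_nonneg_left hcore hD.le
    _ = ∑ vw, p vw * (φ vw.1 ^ m * ψ vw.2 ^ m) := by field_simp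

/-- Sum over `Fin (n+1) → X` via `Fin.cons`. -/
lemma sum_fun_succ {X : Type*} [Fintype X] (n : ℕ) (F : (Fin (n + 1) → X) → ℝ) :
    ∑ f : Fin (n + 1) → X, F f = ∑ z : X, ∑ g : Fin n → X, F (Fin.cons z g) := by
  calc ∑ f : Fin (n + 1) → X, F f
      = ∑ zg : X × (Fin n → X), F (Fin.cons zg.1 zg.2) :=
        (Fintype.sum_equiv (Fin.consEquiv fun _ => X)
          (fun zg => F (Fin.cons zg.1 zg.2)) F (fun zg => rfl)).symm
    _ = ∑ z : X, ∑ g : Fin n → X, F (Fin.cons z g) := Fintype.sum_prod_type _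

lemma comp_cons {X Y : Type*} {n : ℕ} (h : X → Y) (z : X) (g : Fin n → X) :
    (fun i => h ((Fin.cons z g : Fin (n + 1) → X) i))
      = (Fin.cons (h z) (fun i => h (g i)) : Fin (n + 1) → Y) := by
  funext i
  refine Fin.cases ?_ (fun j => ?_) i
  · simp
  · simp

/-- Tensorized reverse hypercontractivity. -/
lemma tensor {V W : Type*} [Fintype V] [Fintype W] [Nonempty V] [Nonempty W]
    (p : V × W → ℝ) (π : V → ℝ) (q : W → ℝ) (lam pi0 : ℝ) (m : ℕ)
    (hp : ∀ vw, 0 < p vw) (hπ : ∀ v, π v = ∑ w, p (v, w)) (hq : ∀ w, q w = ∑ v, p (v, w))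
    (hsum : ∑ vw, p vw = 1)
    (hlam0 : 0 < lam) (hlam : ∀ vw, lam * (π vw.1 * q vw.2) ≤ p vw)
    (hpi00 : 0 < pi0) (hpi0V : ∀ v, pi0 ≤ π v) (hpi0W : ∀ w, pi0 ≤ q w)
    (hm : 2 ≤ m) (hkey : 2 ≤ lam * pi0 * ((m:ℝ) - 1)) :
    ∀ (n : ℕ) (φ : (Fin n → V) → ℝ) (ψ : (Fin n → W) → ℝ),
      (∀ a, 0 ≤ φ a) → (∀ b, 0 ≤ ψ b) →
      (∑ a : Fin n → V, (∏ i, π (a i)) * φ a) ^ m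
          * (∑ b : Fin n → W, (∏ i, q (b i)) * ψ b) ^ m
        ≤ ∑ F : Fin n → V × W, (∏ i, p (F i))
            * (φ (fun i => (F i).1) ^ m * ψ (fun i => (F i).2) ^ m) := by
  have hπpos : ∀ v, 0 < π v := fun v => by
    rw [hπ]; exact sum_pos (fun w _ => hp (v, w)) univ_nonempty
  have hqpos : ∀ w, 0 < q w := fun w => by
    rw [hq]; exact sum_pos (fun v _ => hp (v, w)) univ_nonempty
  intro n
  induction n with
  | zero =>
    intro φ ψ hφ hψ
    have hV : ∑ a : Fin 0 → V, (∏ i, π (a i)) * φ a = φ Fin.elim0 := by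
      rw [Fintype.sum_subsingleton _ (Fin.elim0 : Fin 0 → V)]
      simp
    have hW : ∑ b : Fin 0 → W, (∏ i, q (b i)) * ψ b = ψ Fin.elim0 := by
      rw [Fintype.sum_subsingleton _ (Fin.elim0 : Fin 0 → W)]
      simp
    have hVW : ∑ F : Fin 0 → V × W,
        (∏ i, p (F i)) * (φ (fun i => (F i).1) ^ m * ψ (fun i => (F i).2) ^ m)
        = φ Fin.elim0 ^ m * ψ Fin.elim0 ^ m := by
      rw [Fintype.sum_subsingleton _ (Fin.elim0 : Fin 0 → V × W)]
      have e1 : (fun i => ((Fin.elim0 : Fin 0 → V × W) i).1) = (Fin.elim0 : Fin 0 → V) :=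
        Subsingleton.elim _ _
      have e2 : (fun i => ((Fin.elim0 : Fin 0 → V × W) i).2) = (Fin.elim0 : Fin 0 → W) :=
        Subsingleton.elim _ _
      rw [e1, e2]
      simp
    rw [hV, hW, hVW]
  | succ n ih =>
    intro φ ψ hφ hψ
    set Φ : V → ℝ := fun v => ∑ a : Fin n → V, (∏ i, π (a i)) * φ (Fin.cons v a) with hΦ
    set Ψ : W → ℝ := fun w => ∑ b : Fin n → W, (∏ i, q (b i)) * ψ (Fin.cons w b) with hΨ
    have hΦ0 : ∀ v, 0 ≤ Φ v := fun v => sum_nonneg fun a _ =>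
      mul_nonneg (prod_nonneg fun i _ => (hπpos _).le) (hφ _)
    have hΨ0 : ∀ w, 0 ≤ Ψ w := fun w => sum_nonneg fun b _ =>
      mul_nonneg (prod_nonneg fun i _ => (hqpos _).le) (hψ _)
    have eΦ : ∑ a : Fin (n + 1) → V, (∏ i, π (a i)) * φ a = ∑ v, π v * Φ v := by
      rw [sum_fun_succ n (fun a => (∏ i, π (a i)) * φ a)]
      refine sum_congr rfl fun v _ => ?_
      rw [hΦ, mul_sum]
      refine sum_congr rfl fun a _ => ?_
      have e : (∏ i, π ((Fin.cons v a : Fin (n + 1) → V) i)) = π v * ∏ i, π (a i) := by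
        rw [Fin.prod_univ_succ]
        simp
      rw [e]; ring
    have eΨ : ∑ b : Fin (n + 1) → W, (∏ i, q (b i)) * ψ b = ∑ w, q w * Ψ w := by
      rw [sum_fun_succ n (fun b => (∏ i, q (b i)) * ψ b)]
      refine sum_congr rfl fun w _ => ?_
      rw [hΨ, mul_sum]
      refine sum_congr rfl fun b _ => ?_
      have e : (∏ i, q ((Fin.cons w b : Fin (n + 1) → W) i)) = q w * ∏ i, q (b i) := by
        rw [Fin.prod_univ_succ]
        simp
      rw [e]; ring
    have eF : ∑ F : Fin (n + 1) → V × W,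
        (∏ i, p (F i)) * (φ (fun i => (F i).1) ^ m * ψ (fun i => (F i).2) ^ m)
        = ∑ z : V × W, p z * ∑ G : Fin n → V × W, (∏ i, p (G i)) *
            (φ (Fin.cons z.1 (fun i => (G i).1)) ^ m
              * ψ (Fin.cons z.2 (fun i => (G i).2)) ^ m) := by
      rw [sum_fun_succ n (fun F => (∏ i, p (F i))
        * (φ (fun i => (F i).1) ^ m * ψ (fun i => (F i).2) ^ m))]
      refine sum_congr rfl fun z _ => ?_
      rw [mul_sum]
      refine sum_congr rfl fun G _ => ?_
      rw [comp_cons Prod.fst z G, comp_cons Prod.snd z G]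
      have e : (∏ i, p ((Fin.cons z G : Fin (n + 1) → V × W) i)) = p z * ∏ i, p (G i) := by
        rw [Fin.prod_univ_succ]
        simp
      rw [e]; ring
    rw [eΦ, eΨ, eF]
    have hstep : ∀ z : V × W, Φ z.1 ^ m * Ψ z.2 ^ m
        ≤ ∑ G : Fin n → V × W, (∏ i, p (G i)) *
            (φ (Fin.cons z.1 (fun i => (G i).1)) ^ m
              * ψ (Fin.cons z.2 (fun i => (G i).2)) ^ m) := by
      intro z
      exact ih (fun a => φ (Fin.cons z.1 a)) (fun b => ψ (Fin.cons z.2 b))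
        (fun a => hφ _) (fun b => hψ _)
    calc (∑ v, π v * Φ v) ^ m * (∑ w, q w * Ψ w) ^ m
        ≤ ∑ z : V × W, p z * (Φ z.1 ^ m * Ψ z.2 ^ m) :=
          single_letter p π q lam pi0 m hp hπ hq hsum hlam0 hlam hpi00 hpi0V hpi0W hm hkey
            Φ Ψ hΦ0 hΨ0
      _ ≤ _ := sum_le_sum fun z _ => mul_le_mul_of_nonneg_left (hstep z) (hp z).le

/-- Marginalization over the second component. -/
lemma marg_fst {V W : Type*} [Fintype V] [Fintype W] [Nonempty V] [Nonempty W]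
    (p : V × W → ℝ) (π : V → ℝ) (hπ : ∀ v, π v = ∑ w, p (v, w)) :
    ∀ (n : ℕ) (φ : (Fin n → V) → ℝ),
      ∑ F : Fin n → V × W, (∏ i, p (F i)) * φ (fun i => (F i).1)
        = ∑ a : Fin n → V, (∏ i, π (a i)) * φ a := by
  intro n
  induction n with
  | zero =>
    intro φ
    rw [Fintype.sum_subsingleton _ (Fin.elim0 : Fin 0 → V × W),
      Fintype.sum_subsingleton _ (Fin.elim0 : Fin 0 → V)]
    have e1 : (fun i => ((Fin.elim0 : Fin 0 → V × W) i).1) = (Fin.elim0 : Fin 0 → V) :=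
      Subsingleton.elim _ _
    rw [e1]
    simp
  | succ n ih =>
    intro φ
    rw [sum_fun_succ n (fun F => (∏ i, p (F i)) * φ (fun i => (F i).1)),
      sum_fun_succ n (fun a => (∏ i, π (a i)) * φ a)]
    have eL : ∀ z : V × W, ∑ G : Fin n → V × W,
        (∏ i, p ((Fin.cons z G : Fin (n + 1) → V × W) i)) * φ (fun i => ((Fin.cons z G : Fin (n + 1) → V × W) i).1)
        = p z * ∑ a : Fin n → V, (∏ i, π (a i)) * φ (Fin.cons z.1 a) := by
      intro z
      rw [← ih (fun a => φ (Fin.cons z.1 a)), mul_sum]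
      refine sum_congr rfl fun G _ => ?_
      rw [comp_cons Prod.fst z G]
      have e : (∏ i, p ((Fin.cons z G : Fin (n + 1) → V × W) i)) = p z * ∏ i, p (G i) := by
        rw [Fin.prod_univ_succ]
        simp
      rw [e]; ring
    calc ∑ z : V × W, ∑ G : Fin n → V × W,
          (∏ i, p ((Fin.cons z G : Fin (n + 1) → V × W) i)) * φ (fun i => ((Fin.cons z G : Fin (n + 1) → V × W) i).1)
        = ∑ z : V × W, p z * ∑ a : Fin n → V, (∏ i, π (a i)) * φ (Fin.cons z.1 a) :=
          sum_congr rfl fun z _ => eL z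
      _ = ∑ v, ∑ w, p (v, w) * ∑ a : Fin n → V, (∏ i, π (a i)) * φ (Fin.cons v a) :=
          Fintype.sum_prod_type _
      _ = ∑ v, π v * ∑ a : Fin n → V, (∏ i, π (a i)) * φ (Fin.cons v a) := by
          refine sum_congr rfl fun v _ => ?_
          rw [← sum_mul, ← hπ v]
      _ = ∑ v, ∑ a : Fin n → V, (∏ i, π ((Fin.cons v a : Fin (n + 1) → V) i)) * φ (Fin.cons v a) := by
          refine sum_congr rfl fun v _ => ?_
          rw [mul_sum]
          refine sum_congr rfl fun a _ => ?_
          have e : (∏ i, π ((Fin.cons v a : Fin (n + 1) → V) i)) = π v * ∏ i, π (a i) := by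
            rw [Fin.prod_univ_succ]
            simp
          rw [e]; ring

/-- Marginalization over the first component. -/
lemma marg_snd {V W : Type*} [Fintype V] [Fintype W] [Nonempty V] [Nonempty W]
    (p : V × W → ℝ) (q : W → ℝ) (hq : ∀ w, q w = ∑ v, p (v, w)) :
    ∀ (n : ℕ) (ψ : (Fin n → W) → ℝ),
      ∑ F : Fin n → V × W, (∏ i, p (F i)) * ψ (fun i => (F i).2)
        = ∑ b : Fin n → W, (∏ i, q (b i)) * ψ b := by
  intro n
  induction n with
  | zero =>
    intro ψ
    rw [Fintype.sum_subsingleton _ (Fin.elim0 : Fin 0 → V × W),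
      Fintype.sum_subsingleton _ (Fin.elim0 : Fin 0 → W)]
    have e1 : (fun i => ((Fin.elim0 : Fin 0 → V × W) i).2) = (Fin.elim0 : Fin 0 → W) :=
      Subsingleton.elim _ _
    rw [e1]
    simp
  | succ n ih =>
    intro ψ
    rw [sum_fun_succ n (fun F => (∏ i, p (F i)) * ψ (fun i => (F i).2)),
      sum_fun_succ n (fun b => (∏ i, q (b i)) * ψ b)]
    have eL : ∀ z : V × W, ∑ G : Fin n → V × W,
        (∏ i, p ((Fin.cons z G : Fin (n + 1) → V × W) i)) * ψ (fun i => ((Fin.cons z G : Fin (n + 1) → V × W) i).2)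
        = p z * ∑ b : Fin n → W, (∏ i, q (b i)) * ψ (Fin.cons z.2 b) := by
      intro z
      rw [← ih (fun b => ψ (Fin.cons z.2 b)), mul_sum]
      refine sum_congr rfl fun G _ => ?_
      rw [comp_cons Prod.snd z G]
      have e : (∏ i, p ((Fin.cons z G : Fin (n + 1) → V × W) i)) = p z * ∏ i, p (G i) := by
        rw [Fin.prod_univ_succ]
        simp
      rw [e]; ring
    calc ∑ z : V × W, ∑ G : Fin n → V × W,
          (∏ i, p ((Fin.cons z G : Fin (n + 1) → V × W) i)) * ψ (fun i => ((Fin.cons z G : Fin (n + 1) → V × W) i).2)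
        = ∑ z : V × W, p z * ∑ b : Fin n → W, (∏ i, q (b i)) * ψ (Fin.cons z.2 b) :=
          sum_congr rfl fun z _ => eL z
      _ = ∑ w, ∑ v, p (v, w) * ∑ b : Fin n → W, (∏ i, q (b i)) * ψ (Fin.cons w b) :=
          Fintype.sum_prod_type_right _
      _ = ∑ w, q w * ∑ b : Fin n → W, (∏ i, q (b i)) * ψ (Fin.cons w b) := by
          refine sum_congr rfl fun w _ => ?_
          rw [← sum_mul, ← hq w]
      _ = ∑ w, ∑ b : Fin n → W, (∏ i, q ((Fin.cons w b : Fin (n + 1) → W) i)) * ψ (Fin.cons w b) := by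
          refine sum_congr rfl fun w _ => ?_
          rw [mul_sum]
          refine sum_congr rfl fun b _ => ?_
          have e : (∏ i, q ((Fin.cons w b : Fin (n + 1) → W) i)) = q w * ∏ i, q (b i) := by
            rw [Fin.prod_univ_succ]
            simp
          rw [e]; ring

end Stmt9Aux

open Stmt9Aux

/-- Reverse hypercontractivity bound for i.i.d. products of a full-support pmf:
there are constants `α, β ≥ 1`, independent of `n`, `A`, `B`, such that
`P[V^n ∈ A, W^n ∈ B] ≥ P[V^n ∈ A]^α · P[W^n ∈ B]^β`. -/
theorem stmt9 {V W : Type*} [Fintype V] [Fintype W] [Nonempty V] [Nonempty W]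
    (p : V × W → ℝ) (hpos : ∀ vw, 0 < p vw) (hsum : ∑ vw, p vw = 1) :
    ∃ α β : ℝ, 1 ≤ α ∧ 1 ≤ β ∧
      ∀ (n : ℕ) (A : Finset (Fin n → V)) (B : Finset (Fin n → W)),
        (∑ f ∈ Finset.univ.filter (fun f : Fin n → V × W =>
            (fun i => (f i).1) ∈ A), ∏ i, p (f i)) ^ α *
          (∑ f ∈ Finset.univ.filter (fun f : Fin n → V × W =>
            (fun i => (f i).2) ∈ B), ∏ i, p (f i)) ^ β ≤
        ∑ f ∈ Finset.univ.filter (fun f : Fin n → V × W =>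
            (fun i => (f i).1) ∈ A ∧ (fun i => (f i).2) ∈ B), ∏ i, p (f i) := by
  classical
  set π : V → ℝ := fun v => ∑ w, p (v, w) with hπdef
  set q : W → ℝ := fun w => ∑ v, p (v, w) with hqdef
  have hπ : ∀ v, π v = ∑ w, p (v, w) := fun v => rfl
  have hq : ∀ w, q w = ∑ v, p (v, w) := fun w => rfl
  have hπpos : ∀ v, 0 < π v := fun v => sum_pos (fun w _ => hpos (v, w)) univ_nonempty
  have hqpos : ∀ w, 0 < q w := fun w => sum_pos (fun v _ => hpos (v, w)) univ_nonempty
  obtain ⟨vw0, -, hvw0⟩ := Finset.exists_min_image (univ : Finset (V × W))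
    (fun vw => p vw / (π vw.1 * q vw.2)) univ_nonempty
  set lam : ℝ := p vw0 / (π vw0.1 * q vw0.2) with hlamdef
  have hlam0 : 0 < lam := div_pos (hpos vw0) (mul_pos (hπpos _) (hqpos _))
  have hlam : ∀ vw, lam * (π vw.1 * q vw.2) ≤ p vw := by
    intro vw
    have h := hvw0 vw (mem_univ vw)
    have hD : 0 < π vw.1 * q vw.2 := mul_pos (hπpos _) (hqpos _)
    calc lam * (π vw.1 * q vw.2) ≤ (p vw / (π vw.1 * q vw.2)) * (π vw.1 * q vw.2) :=
          mul_le_mul_of_nonneg_right h hD.le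
      _ = p vw := div_mul_cancel₀ _ (ne_of_gt hD)
  obtain ⟨v0, -, hv0⟩ := Finset.exists_min_image (univ : Finset V) π univ_nonempty
  obtain ⟨w0, -, hw0⟩ := Finset.exists_min_image (univ : Finset W) q univ_nonempty
  set pi0 : ℝ := min (π v0) (q w0) with hpi0def
  have hpi00 : 0 < pi0 := lt_min (hπpos v0) (hqpos w0)
  have hpi0V : ∀ v, pi0 ≤ π v := fun v => le_trans (min_le_left _ _) (hv0 v (mem_univ v))
  have hpi0W : ∀ w, pi0 ≤ q w := fun w => le_trans (min_le_right _ _) (hw0 w (mem_univ w))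
  set m : ℕ := 2 + Nat.ceil (2 / (lam * pi0)) with hmdef
  have hm : 2 ≤ m := Nat.le_add_right 2 _
  have hm0 : m ≠ 0 := by omega
  have hkey : 2 ≤ lam * pi0 * ((m:ℝ) - 1) := by
    have hc := Nat.le_ceil (2 / (lam * pi0))
    have hlp : 0 < lam * pi0 := mul_pos hlam0 hpi00
    have hm1 : (m:ℝ) - 1 = 1 + (Nat.ceil (2 / (lam * pi0)) : ℝ) := by
      rw [hmdef]; push_cast; ring
    rw [hm1]
    calc (2:ℝ) = lam * pi0 * (2 / (lam * pi0)) := by field_simp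
      _ ≤ lam * pi0 * (1 + (Nat.ceil (2 / (lam * pi0)) : ℝ)) := by
          refine mul_le_mul_of_nonneg_left ?_ hlp.le
          linarith [hc]
  have hm1R : (1:ℝ) ≤ (m:ℝ) := by exact_mod_cast (by omega : (1:ℕ) ≤ m)
  refine ⟨(m:ℝ), (m:ℝ), hm1R, hm1R, ?_⟩
  intro n A B
  set φ : (Fin n → V) → ℝ := fun a => if a ∈ A then (1:ℝ) else 0 with hφdef
  set ψ : (Fin n → W) → ℝ := fun b => if b ∈ B then (1:ℝ) else 0 with hψdef
  have hφ0 : ∀ a, 0 ≤ φ a := fun a => by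
    rw [hφdef]; dsimp only; split <;> norm_num
  have hψ0 : ∀ b, 0 ≤ ψ b := fun b => by
    rw [hψdef]; dsimp only; split <;> norm_num
  have hA : ∑ f ∈ Finset.univ.filter (fun f : Fin n → V × W =>
      (fun i => (f i).1) ∈ A), ∏ i, p (f i)
      = ∑ a : Fin n → V, (∏ i, π (a i)) * φ a := by
    rw [← marg_fst p π hπ n φ, sum_filter]
    refine sum_congr rfl fun f _ => ?_
    rw [hφdef]; dsimp only
    by_cases h : (fun i => (f i).1) ∈ A
    · rw [if_pos h, if_pos h, mul_one]
    · rw [if_neg h, if_neg h, mul_zero]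
  have hB : ∑ f ∈ Finset.univ.filter (fun f : Fin n → V × W =>
      (fun i => (f i).2) ∈ B), ∏ i, p (f i)
      = ∑ b : Fin n → W, (∏ i, q (b i)) * ψ b := by
    rw [← marg_snd p q hq n ψ, sum_filter]
    refine sum_congr rfl fun f _ => ?_
    rw [hψdef]; dsimp only
    by_cases h : (fun i => (f i).2) ∈ B
    · rw [if_pos h, if_pos h, mul_one]
    · rw [if_neg h, if_neg h, mul_zero]
  have hJ : ∑ f ∈ Finset.univ.filter (fun f : Fin n → V × W =>
      (fun i => (f i).1) ∈ A ∧ (fun i => (f i).2) ∈ B), ∏ i, p (f i)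
      = ∑ F : Fin n → V × W, (∏ i, p (F i))
          * (φ (fun i => (F i).1) ^ m * ψ (fun i => (F i).2) ^ m) := by
    rw [sum_filter]
    refine sum_congr rfl fun f _ => ?_
    rw [hφdef, hψdef]; dsimp only
    by_cases h1 : (fun i => (f i).1) ∈ A <;> by_cases h2 : (fun i => (f i).2) ∈ B
    · rw [if_pos ⟨h1, h2⟩, if_pos h1, if_pos h2]; norm_num
    · rw [if_neg (fun h => h2 h.2), if_pos h1, if_neg h2, zero_pow hm0]; ring
    · rw [if_neg (fun h => h1 h.1), if_neg h1, if_pos h2, zero_pow hm0]; ring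
    · rw [if_neg (fun h => h1 h.1), if_neg h1, if_neg h2, zero_pow hm0]; ring
  rw [hA, hB, hJ, Real.rpow_natCast, Real.rpow_natCast]
  exact tensor p π q lam pi0 m hpos hπ hq hsum hlam0 hlam hpi00 hpi0V hpi0W hm hkey n φ ψ hφ0 hψ0
end

section
/- Lower bound via expected Hamming distortion: let X^n be i.i.d. with per-symbol law p_X on a finite alphabet, encoded by any function C : X^n → {0,1}^{⌊nR⌋} with R < H(X), and decoded by any function producing X̂^n. Then there exists δ > 0, depending only on R and p_X, such that for all sufficiently large n, Σ_{i=1}^n P[X̂_i ≠ X_i] ≥ nδ; in particular max_{1≤i≤n} P[X̂_i ≠ X_i] ≥ δ. -/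
attribute [local instance] Classical.propDecidable

set_option maxHeartbeats 1000000

open Finset Real

lemma factorize {X : Type*} [Fintype X] (n : ℕ) (c : Fin n → X → ℝ) :
    ∑ xn : Fin n → X, ∏ j, c j (xn j) = ∏ j, ∑ x, c j x :=
  (Fintype.prod_sum c).symm

lemma pair_exp {X : Type*} [Fintype X] (n : ℕ) (p : X → ℝ) (h1 : ∑ x, p x = 1)
    (g : X → ℝ) (hg : ∑ x, p x * g x = 0) (j k : Fin n) :
    ∑ xn : Fin n → X, (∏ l, p (xn l)) * (g (xn j) * g (xn k)) =
      if j = k then ∑ x, p x * g x ^ 2 else 0 := by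
  have key : ∀ xn : Fin n → X, (∏ l, p (xn l)) * (g (xn j) * g (xn k)) =
      ∏ l, (p (xn l) * ((if l = j then g (xn l) else 1) * (if l = k then g (xn l) else 1))) := by
    intro xn
    rw [Finset.prod_mul_distrib, Finset.prod_mul_distrib, Finset.prod_ite_eq', Finset.prod_ite_eq']
    simp
  calc ∑ xn : Fin n → X, (∏ l, p (xn l)) * (g (xn j) * g (xn k))
      = ∑ xn : Fin n → X, ∏ l, (p (xn l) * ((if l = j then g (xn l) else 1) * (if l = k then g (xn l) else 1))) := by
        exact Finset.sum_congr rfl fun xn _ => key xn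
    _ = ∏ l, ∑ x, (p x * ((if l = j then g x else 1) * (if l = k then g x else 1))) :=
        factorize n (fun l x => p x * ((if l = j then g x else 1) * (if l = k then g x else 1)))
    _ = if j = k then ∑ x, p x * g x ^ 2 else 0 := by
        by_cases hjk : j = k
        · subst hjk
          rw [if_pos rfl]
          rw [Finset.prod_eq_single j]
          · simp [sq, mul_assoc]
          · intro l _ hl
            simp [if_neg hl, h1]
          · simp
        · rw [if_neg hjk]
          apply Finset.prod_eq_zero (Finset.mem_univ j)
          simp only [if_pos rfl, if_neg hjk]
          simpa [mul_one] using hg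

lemma second_moment {X : Type*} [Fintype X] (n : ℕ) (p : X → ℝ) (h1 : ∑ x, p x = 1)
    (g : X → ℝ) (hg : ∑ x, p x * g x = 0) :
    ∑ xn : Fin n → X, (∏ l, p (xn l)) * (∑ j, g (xn j)) ^ 2
      = n * ∑ x, p x * g x ^ 2 := by
  have expand : ∀ xn : Fin n → X, (∏ l, p (xn l)) * (∑ j, g (xn j)) ^ 2
      = ∑ j : Fin n, ∑ k : Fin n, (∏ l, p (xn l)) * (g (xn j) * g (xn k)) := by
    intro xn
    rw [sq, Finset.sum_mul_sum]
    rw [Finset.mul_sum]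
    exact Finset.sum_congr rfl fun j _ => by rw [Finset.mul_sum]
  rw [Finset.sum_congr rfl fun xn _ => expand xn]
  rw [Finset.sum_comm]
  have : ∀ j : Fin n, ∑ xn : Fin n → X, ∑ k : Fin n, (∏ l, p (xn l)) * (g (xn j) * g (xn k))
      = ∑ k : Fin n, ∑ xn : Fin n → X, (∏ l, p (xn l)) * (g (xn j) * g (xn k)) :=
    fun j => Finset.sum_comm
  rw [Finset.sum_congr rfl fun j _ => this j]
  have : ∀ j k : Fin n, ∑ xn : Fin n → X, (∏ l, p (xn l)) * (g (xn j) * g (xn k))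
      = if j = k then ∑ x, p x * g x ^ 2 else 0 := fun j k => pair_exp n p h1 g hg j k
  rw [Finset.sum_congr rfl fun j _ => Finset.sum_congr rfl fun k _ => this j k]
  simp [Finset.sum_ite_eq, Finset.card_univ]

lemma chebyshev {X : Type*} [Fintype X] (n : ℕ) (hn : 0 < n)
    (p : X → ℝ) (hp : ∀ x, 0 ≤ p x) (h1 : ∑ x, p x = 1)
    (f : X → ℝ) (ε : ℝ) (hε : 0 < ε) :
    ∑ xn ∈ Finset.univ.filter
        (fun xn : Fin n → X => ∑ j, f (xn j) ≤ n * ((∑ x, p x * f x) - ε)),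
      ∏ l, p (xn l)
      ≤ (∑ x, p x * (f x - ∑ y, p y * f y) ^ 2) / (n * ε ^ 2) := by
  set μ := ∑ x, p x * f x with hμ
  set g : X → ℝ := fun x => f x - μ with hgdef
  have hg : ∑ x, p x * g x = 0 := by
    simp only [hgdef, mul_sub]
    rw [Finset.sum_sub_distrib, ← Finset.sum_mul, h1, one_mul]
    ring
  have hP : ∀ xn : Fin n → X, (0:ℝ) ≤ ∏ l, p (xn l) :=
    fun xn => Finset.prod_nonneg fun l _ => hp _
  set S := Finset.univ.filter
      (fun xn : Fin n → X => ∑ j, f (xn j) ≤ n * (μ - ε)) with hS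
  have h2 : ∀ xn ∈ S,
      ((n:ℝ) * ε) ^ 2 * ∏ l, p (xn l) ≤ (∏ l, p (xn l)) * (∑ j, g (xn j)) ^ 2 := by
    intro xn hxn
    rw [hS, Finset.mem_filter] at hxn
    have hsum : ∑ j, g (xn j) ≤ -((n:ℝ) * ε) := by
      simp only [hgdef]
      rw [Finset.sum_sub_distrib, Finset.sum_const, Finset.card_univ, Fintype.card_fin,
        nsmul_eq_mul]
      nlinarith [hxn.2]
    have hne : 0 ≤ (n:ℝ) * ε := by positivity
    have : ((n:ℝ) * ε) ^ 2 ≤ (∑ j, g (xn j)) ^ 2 := by nlinarith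
    nlinarith [hP xn, this]
  have key : ((n:ℝ) * ε) ^ 2 * ∑ xn ∈ S, ∏ l, p (xn l)
      ≤ (n:ℝ) * ∑ x, p x * g x ^ 2 := by
    rw [← second_moment n p h1 g hg]
    calc ((n:ℝ) * ε) ^ 2 * ∑ xn ∈ S, ∏ l, p (xn l)
        = ∑ xn ∈ S, ((n:ℝ) * ε) ^ 2 * ∏ l, p (xn l) := Finset.mul_sum _ _ _
      _ ≤ ∑ xn ∈ S, (∏ l, p (xn l)) * (∑ j, g (xn j)) ^ 2 := Finset.sum_le_sum h2
      _ ≤ ∑ xn : Fin n → X, (∏ l, p (xn l)) * (∑ j, g (xn j)) ^ 2 := by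
          apply Finset.sum_le_sum_of_subset_of_nonneg (Finset.subset_univ S)
          intro xn _ _
          exact mul_nonneg (hP xn) (sq_nonneg _)
  have hnpos : (0:ℝ) < n := by exact_mod_cast hn
  have hvar : (0:ℝ) ≤ ∑ x, p x * g x ^ 2 :=
    Finset.sum_nonneg fun x _ => mul_nonneg (hp x) (sq_nonneg _)
  rw [le_div_iff₀ (by positivity)]
  nlinarith [key]
lemma ball_bound {X : Type*} [Fintype X] (n t : ℕ) (s : ℝ) (hs0 : 0 < s) (hs1 : s ≤ 1)
    (cw : Fin n → X) :
    ((Finset.univ.filter (fun xn : Fin n → X =>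
        (Finset.univ.filter (fun j => cw j ≠ xn j)).card ≤ t)).card : ℝ) * s ^ t
      ≤ (1 + ((Fintype.card X : ℝ) - 1) * s) ^ n := by
  set w : (Fin n → X) → ℝ := fun xn => ∏ j, (if cw j = xn j then (1:ℝ) else s) with hw
  have hwval : ∀ xn : Fin n → X,
      w xn = s ^ (Finset.univ.filter (fun j => cw j ≠ xn j)).card := by
    intro xn
    rw [hw]
    simp only
    rw [Finset.prod_ite]
    rw [Finset.prod_const, Finset.prod_const, one_pow, one_mul]
  have h1 : ∀ xn ∈ Finset.univ.filter (fun xn : Fin n → X =>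
      (Finset.univ.filter (fun j => cw j ≠ xn j)).card ≤ t), s ^ t ≤ w xn := by
    intro xn hxn
    rw [Finset.mem_filter] at hxn
    rw [hwval xn]
    exact pow_le_pow_of_le_one hs0.le hs1 hxn.2
  have h2 : ∀ xn : Fin n → X, 0 ≤ w xn := by
    intro xn; rw [hwval]; positivity
  calc ((Finset.univ.filter (fun xn : Fin n → X =>
        (Finset.univ.filter (fun j => cw j ≠ xn j)).card ≤ t)).card : ℝ) * s ^ t
      = ∑ _xn ∈ Finset.univ.filter (fun xn : Fin n → X =>
        (Finset.univ.filter (fun j => cw j ≠ xn j)).card ≤ t), s ^ t := by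
        rw [Finset.sum_const, nsmul_eq_mul]
    _ ≤ ∑ xn ∈ Finset.univ.filter (fun xn : Fin n → X =>
        (Finset.univ.filter (fun j => cw j ≠ xn j)).card ≤ t), w xn := Finset.sum_le_sum h1
    _ ≤ ∑ xn : Fin n → X, w xn := Finset.sum_le_sum_of_subset_of_nonneg
        (Finset.subset_univ _) (fun xn _ _ => h2 xn)
    _ = ∏ j, ∑ x, (if cw j = x then (1:ℝ) else s) :=
        factorize n (fun j x => if cw j = x then (1:ℝ) else s)
    _ = (1 + ((Fintype.card X : ℝ) - 1) * s) ^ n := by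
        have : ∀ j : Fin n, ∑ x, (if cw j = x then (1:ℝ) else s)
            = 1 + ((Fintype.card X : ℝ) - 1) * s := by
          intro j
          have : ∀ x : X, (if cw j = x then (1:ℝ) else s)
              = s + (if cw j = x then 1 - s else 0) := by
            intro x; split_ifs <;> ring
          rw [Finset.sum_congr rfl fun x _ => this x, Finset.sum_add_distrib,
            Finset.sum_const, Finset.sum_ite_eq, if_pos (Finset.mem_univ _),
            nsmul_eq_mul, Finset.card_univ]
          ring
        rw [Finset.prod_congr rfl fun j _ => this j, Finset.prod_const, Finset.card_univ,
          Fintype.card_fin]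

lemma atypical_le {X : Type*} [Fintype X] (n : ℕ) (p : X → ℝ) (hp : ∀ x, 0 ≤ p x)
    (a : ℝ) (xn : Fin n → X) (h : (2:ℝ) ^ (-a) < ∏ j, p (xn j)) :
    ∑ j, -Real.logb 2 (p (xn j)) ≤ a := by
  have hpos : ∀ j : Fin n, 0 < p (xn j) := by
    intro j
    rcases lt_or_eq_of_le (hp (xn j)) with h' | h'
    · exact h'
    · exfalso
      have : ∏ j', p (xn j') = 0 := Finset.prod_eq_zero (Finset.mem_univ j) h'.symm
      have h2 : (0:ℝ) < (2:ℝ) ^ (-a) := Real.rpow_pos_of_pos (by norm_num) _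
      linarith
  have hlog : Real.logb 2 ((2:ℝ) ^ (-a)) < Real.logb 2 (∏ j, p (xn j)) :=
    Real.logb_lt_logb (by norm_num) (Real.rpow_pos_of_pos (by norm_num) _) h
  rw [Real.logb_rpow (by norm_num) (by norm_num)] at hlog
  rw [Real.logb_prod _ _ (fun j _ => (hpos j).ne')] at hlog
  have heq : ∑ j, -Real.logb 2 (p (xn j)) = -∑ j, Real.logb 2 (p (xn j)) := by
    simp
  rw [heq]
  linarith

/-- Converse to the lossy source coding theorem (expected Hamming distortion):
any rate-`R` code with `R < H(X)` has, for all large `n`, total per-symbol error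
probability at least `nδ`, hence some symbol with error probability `≥ δ`. -/
theorem stmt13 {X : Type*} [Fintype X] [Nonempty X]
    (pX : X → ℝ) (hp : ∀ x, 0 ≤ pX x) (h1 : ∑ x, pX x = 1)
    (R : ℝ) (hR0 : 0 ≤ R) (hR : R < -∑ x, pX x * Real.logb 2 (pX x)) :
    ∃ δ : ℝ, 0 < δ ∧ ∃ N : ℕ, ∀ n ≥ N,
      ∀ (C : (Fin n → X) → Fin (⌊(n : ℝ) * R⌋₊) → Bool)
        (D : (Fin (⌊(n : ℝ) * R⌋₊) → Bool) → Fin n → X),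
        ((n : ℝ) * δ ≤ ∑ i : Fin n,
          ∑ xn ∈ Finset.univ.filter (fun xn : Fin n → X => D (C xn) i ≠ xn i),
            ∏ j, pX (xn j)) ∧
        ∃ i : Fin n, δ ≤
          ∑ xn ∈ Finset.univ.filter (fun xn : Fin n → X => D (C xn) i ≠ xn i),
            ∏ j, pX (xn j) := by
  set H : ℝ := -∑ x, pX x * Real.logb 2 (pX x) with hHdef
  have hHpos : 0 < H := lt_of_le_of_lt hR0 hR
  set ε : ℝ := (H - R) / 2 with hεdef
  have hε : 0 < ε := by rw [hεdef]; linarith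
  have hHε : H - ε = R + ε := by rw [hεdef]; ring
  set A : ℝ := (Fintype.card X : ℝ) with hAdef
  have hA1 : (1:ℝ) ≤ A := by
    rw [hAdef]; exact_mod_cast Fintype.card_pos
  have hA0 : (0:ℝ) < A := lt_of_lt_of_le one_pos hA1
  have h2ε4 : (1:ℝ) < 2 ^ (ε/4) :=
    (Real.one_lt_rpow_iff_of_pos (by norm_num)).mpr (Or.inl ⟨by norm_num, by positivity⟩)
  set s : ℝ := min 1 ((2 ^ (ε/4) - 1) / A) with hsdef
  have hs0 : 0 < s := lt_min one_pos (div_pos (by linarith) hA0)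
  have hs1 : s ≤ 1 := min_le_left _ _
  have hAs : 1 + (A - 1) * s ≤ 2 ^ (ε/4) := by
    have hsr : s ≤ (2 ^ (ε/4) - 1) / A := min_le_right _ _
    have h2' : A * s ≤ 2 ^ (ε/4) - 1 := by
      calc A * s ≤ A * ((2 ^ (ε/4) - 1) / A) := by nlinarith
        _ = 2 ^ (ε/4) - 1 := by field_simp
    nlinarith
  have hbase : (0:ℝ) ≤ 1 + (A - 1) * s := by nlinarith
  set L : ℝ := max 1 (Real.logb 2 (1/s)) with hLdef
  have hL1 : (1:ℝ) ≤ L := le_max_left _ _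
  have hL0 : (0:ℝ) < L := lt_of_lt_of_le one_pos hL1
  set α : ℝ := ε / (4 * L) with hαdef
  have hα0 : 0 < α := by rw [hαdef]; positivity
  have hsinv1 : (1:ℝ) ≤ 1/s := by
    rw [le_div_iff₀ hs0]; linarith
  have hpow : (1/s) ^ α ≤ (2:ℝ) ^ (ε/4) := by
    have hlogb : Real.logb 2 (1/s) ≤ L := le_max_right _ _
    have h0 : (1/s : ℝ) = 2 ^ Real.logb 2 (1/s) :=
      (Real.rpow_logb (by norm_num) (by norm_num) (by positivity)).symm
    rw [h0, ← Real.rpow_mul (by norm_num : (0:ℝ) ≤ 2)]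
    apply Real.rpow_le_rpow_of_exponent_le one_le_two
    have hLα : L * α = ε / 4 := by
      rw [hαdef]; field_simp
    calc Real.logb 2 (1/s) * α ≤ L * α := mul_le_mul_of_nonneg_right hlogb hα0.le
      _ = ε / 4 := hLα
  set f0 : X → ℝ := fun x => -Real.logb 2 (pX x) with hf0
  have hμ : ∑ x, pX x * f0 x = H := by
    rw [hHdef, hf0]
    simp [mul_neg]
  set σ2 : ℝ := ∑ x, pX x * (f0 x - H) ^ 2 with hσ2
  have hσ2nn : 0 ≤ σ2 := Finset.sum_nonneg fun x _ => mul_nonneg (hp x) (sq_nonneg _)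
  refine ⟨α/2, by positivity, max (max (⌈4*σ2/ε^2⌉₊ + 1) (⌈4/ε⌉₊ + 1)) 1, ?_⟩
  intro n hn C D
  have hn1 : 1 ≤ n := le_trans (le_max_right _ _) hn
  have hn0 : 0 < n := hn1
  have hnR : (0:ℝ) < n := by exact_mod_cast hn0
  have hnσ : 4*σ2/ε^2 < (n:ℝ) := by
    have h2 : ⌈4*σ2/ε^2⌉₊ + 1 ≤ n := le_trans (le_trans (le_max_left _ _) (le_max_left _ _)) hn
    have := Nat.le_ceil (4*σ2/ε^2)
    have h3 : ((⌈4*σ2/ε^2⌉₊ + 1 : ℕ) : ℝ) ≤ (n:ℝ) := by exact_mod_cast h2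
    push_cast at h3
    linarith
  have hnε : 4/ε < (n:ℝ) := by
    have h2 : ⌈4/ε⌉₊ + 1 ≤ n := le_trans (le_trans (le_max_right _ _) (le_max_left _ _)) hn
    have := Nat.le_ceil (4/ε)
    have h3 : ((⌈4/ε⌉₊ + 1 : ℕ) : ℝ) ≤ (n:ℝ) := by exact_mod_cast h2
    push_cast at h3
    linarith
  set P : (Fin n → X) → ℝ := fun xn => ∏ j, pX (xn j) with hP
  have hPnn : ∀ xn, 0 ≤ P xn := fun xn => Finset.prod_nonneg fun j _ => hp _
  have hPsum : ∑ xn : Fin n → X, P xn = 1 := by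
    rw [hP]
    rw [factorize n (fun _ x => pX x)]
    simp [h1]
  set t := ⌊α * (n:ℝ)⌋₊ with ht
  set B0 : ℝ := (2:ℝ) ^ (-((n:ℝ) * (H - ε))) with hB0
  have hB0pos : 0 < B0 := Real.rpow_pos_of_pos (by norm_num) _
  set mc : (Fin n → X) → ℕ :=
    fun xn => (Finset.univ.filter (fun i => D (C xn) i ≠ xn i)).card with hmc
  set Bad := Finset.univ.filter (fun xn : Fin n → X => mc xn ≤ t) with hBad
  set Bad1 := Finset.univ.filter
    (fun xn : Fin n → X => ∑ j, f0 (xn j) ≤ (n:ℝ) * (H - ε)) with hBad1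
  set Bad2 := Finset.univ.filter
    (fun xn : Fin n → X => P xn ≤ B0 ∧ mc xn ≤ t) with hBad2
  -- Step A : Bad ⊆ Bad1 ∪ Bad2
  have hsub : Bad ⊆ Bad1 ∪ Bad2 := by
    intro xn hxn
    rw [hBad, Finset.mem_filter] at hxn
    by_cases hPx : P xn ≤ B0
    · exact Finset.mem_union_right _ (by rw [hBad2, Finset.mem_filter]; exact ⟨Finset.mem_univ _, hPx, hxn.2⟩)
    · push_neg at hPx
      apply Finset.mem_union_left
      rw [hBad1, Finset.mem_filter]
      refine ⟨Finset.mem_univ _, ?_⟩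
      have := atypical_le n pX hp ((n:ℝ) * (H - ε)) xn (by rw [← hB0]; exact hPx)
      simpa [hf0] using this
  have stepA : ∑ xn ∈ Bad, P xn ≤ (∑ xn ∈ Bad1, P xn) + ∑ xn ∈ Bad2, P xn := by
    calc ∑ xn ∈ Bad, P xn ≤ ∑ xn ∈ Bad1 ∪ Bad2, P xn :=
          Finset.sum_le_sum_of_subset_of_nonneg hsub (fun xn _ _ => hPnn xn)
      _ ≤ (∑ xn ∈ Bad1, P xn) + ∑ xn ∈ Bad2, P xn := by
          have := Finset.sum_union_inter (s₁ := Bad1) (s₂ := Bad2) (f := P)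
          have hnn : 0 ≤ ∑ xn ∈ Bad1 ∩ Bad2, P xn :=
            Finset.sum_nonneg fun xn _ => hPnn xn
          linarith
  -- Step B : Chebyshev
  have stepB : ∑ xn ∈ Bad1, P xn ≤ 1/4 := by
    have cheb := chebyshev n hn0 pX hp h1 f0 ε hε
    rw [hμ] at cheb
    have : (∑ x, pX x * (f0 x - H) ^ 2) / ((n:ℝ) * ε ^ 2) ≤ 1/4 := by
      rw [div_le_iff₀ (by positivity)]
      rw [div_lt_iff₀ (by positivity)] at hnσ
      nlinarith
    calc ∑ xn ∈ Bad1, P xn ≤ _ := cheb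
      _ ≤ 1/4 := this
  -- Step C : covering bound
  set V : ℝ := (1 + (A - 1) * s) ^ n with hV
  have hVnn : 0 ≤ V := pow_nonneg hbase n
  have hst : (0:ℝ) < s ^ t := pow_pos hs0 t
  have hsinvt : (0:ℝ) ≤ (1/s) ^ t := by positivity
  have hfib : ∑ xn ∈ Bad2, P xn
      = ∑ b : Fin ⌊(n : ℝ) * R⌋₊ → Bool, ∑ xn ∈ Bad2.filter (fun xn => C xn = b), P xn :=
    (Finset.sum_fiberwise_of_maps_to (fun xn _ => Finset.mem_univ (C xn)) P).symm
  have hball : ∀ b : Fin ⌊(n : ℝ) * R⌋₊ → Bool,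
      ∑ xn ∈ Bad2.filter (fun xn => C xn = b), P xn ≤ V * (1/s) ^ t * B0 := by
    intro b
    set Ball := Finset.univ.filter (fun xn : Fin n → X =>
      P xn ≤ B0 ∧ (Finset.univ.filter (fun j => D b j ≠ xn j)).card ≤ t) with hBall
    have hsub2 : Bad2.filter (fun xn => C xn = b) ⊆ Ball := by
      intro xn hxn
      rw [Finset.mem_filter, hBad2, Finset.mem_filter] at hxn
      obtain ⟨⟨-, hP2, hmc2⟩, hCb⟩ := hxn
      rw [hBall, Finset.mem_filter]
      refine ⟨Finset.mem_univ _, hP2, ?_⟩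
      rw [hmc] at hmc2
      simp only [hCb] at hmc2
      exact hmc2
    have hcard : (Ball.card : ℝ) ≤ V * (1/s) ^ t := by
      have hmono : Ball ⊆ Finset.univ.filter (fun xn : Fin n → X =>
          (Finset.univ.filter (fun j => D b j ≠ xn j)).card ≤ t) := by
        intro xn hxn
        rw [hBall, Finset.mem_filter] at hxn
        rw [Finset.mem_filter]
        exact ⟨Finset.mem_univ _, hxn.2.2⟩
      have hc : (Ball.card : ℝ) ≤ ((Finset.univ.filter (fun xn : Fin n → X =>
          (Finset.univ.filter (fun j => D b j ≠ xn j)).card ≤ t)).card : ℝ) :=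
        Nat.cast_le.mpr (Finset.card_le_card hmono)
      have hbb := ball_bound n t s hs0 hs1 (D b)
      rw [← hV] at hbb
      have h9 : (Ball.card : ℝ) * s ^ t ≤ V :=
        le_trans (mul_le_mul_of_nonneg_right hc hst.le) hbb
      have h10 : (1/s) ^ t = (s ^ t)⁻¹ := by
        rw [one_div, inv_pow]
      rw [h10, ← div_eq_mul_inv, le_div_iff₀ hst]
      exact h9
    calc ∑ xn ∈ Bad2.filter (fun xn => C xn = b), P xn
        ≤ ∑ xn ∈ Ball, P xn :=
          Finset.sum_le_sum_of_subset_of_nonneg hsub2 (fun xn _ _ => hPnn xn)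
      _ ≤ ∑ _xn ∈ Ball, B0 := Finset.sum_le_sum (fun xn hxn => by
          rw [hBall, Finset.mem_filter] at hxn; exact hxn.2.1)
      _ = (Ball.card : ℝ) * B0 := by rw [Finset.sum_const, nsmul_eq_mul]
      _ ≤ V * (1/s) ^ t * B0 := mul_le_mul_of_nonneg_right hcard hB0pos.le
  have h2m : ∑ xn ∈ Bad2, P xn ≤ (2:ℝ) ^ (⌊(n : ℝ) * R⌋₊:ℕ) * (V * (1/s) ^ t * B0) := by
    rw [hfib]
    calc ∑ b : Fin ⌊(n : ℝ) * R⌋₊ → Bool, ∑ xn ∈ Bad2.filter (fun xn => C xn = b), P xn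
        ≤ ∑ _b : Fin ⌊(n : ℝ) * R⌋₊ → Bool, V * (1/s) ^ t * B0 :=
          Finset.sum_le_sum (fun b _ => hball b)
      _ = (2:ℝ) ^ (⌊(n : ℝ) * R⌋₊:ℕ) * (V * (1/s) ^ t * B0) := by
          rw [Finset.sum_const, nsmul_eq_mul, Finset.card_univ]
          norm_num
  have F1 : (2:ℝ) ^ (⌊(n : ℝ) * R⌋₊:ℕ) ≤ (2:ℝ) ^ ((n:ℝ) * R) := by
    rw [← Real.rpow_natCast 2 ⌊(n : ℝ) * R⌋₊]
    apply Real.rpow_le_rpow_of_exponent_le one_le_two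
    exact Nat.floor_le (by positivity)
  have F2 : V ≤ (2:ℝ) ^ ((n:ℝ) * (ε/4)) := by
    rw [hV]
    calc (1 + (A - 1) * s) ^ n ≤ ((2:ℝ) ^ (ε/4)) ^ n := pow_le_pow_left₀ hbase hAs n
      _ = (2:ℝ) ^ ((n:ℝ) * (ε/4)) := by
          rw [← Real.rpow_natCast ((2:ℝ) ^ (ε/4)) n, ← Real.rpow_mul (by norm_num : (0:ℝ) ≤ 2)]
          rw [mul_comm]
  have F3 : (1/s) ^ t ≤ (2:ℝ) ^ ((n:ℝ) * (ε/4)) := by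
    calc (1/s) ^ t = (1/s) ^ ((t:ℝ)) := (Real.rpow_natCast _ t).symm
      _ ≤ (1/s) ^ (α * (n:ℝ)) :=
          Real.rpow_le_rpow_of_exponent_le hsinv1 (Nat.floor_le (by positivity))
      _ = ((1/s) ^ α) ^ ((n:ℝ)) := by rw [← Real.rpow_mul (by positivity)]
      _ ≤ ((2:ℝ) ^ (ε/4)) ^ ((n:ℝ)) :=
          Real.rpow_le_rpow (by positivity) hpow (by positivity)
      _ = (2:ℝ) ^ ((n:ℝ) * (ε/4)) := by
          rw [← Real.rpow_mul (by norm_num : (0:ℝ) ≤ 2), mul_comm]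
  have stepC : ∑ xn ∈ Bad2, P xn ≤ 1/4 := by
    have Fmul : (2:ℝ) ^ (⌊(n : ℝ) * R⌋₊:ℕ) * (V * (1/s) ^ t * B0)
        ≤ (2:ℝ) ^ ((n:ℝ) * R) * ((2:ℝ) ^ ((n:ℝ) * (ε/4)) * (2:ℝ) ^ ((n:ℝ) * (ε/4)) * B0) := by
      have h2mnn : (0:ℝ) ≤ (2:ℝ) ^ (⌊(n : ℝ) * R⌋₊:ℕ) := by positivity
      have hinner : V * (1/s) ^ t * B0
          ≤ (2:ℝ) ^ ((n:ℝ) * (ε/4)) * (2:ℝ) ^ ((n:ℝ) * (ε/4)) * B0 := by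
        apply mul_le_mul_of_nonneg_right _ hB0pos.le
        apply mul_le_mul F2 F3 hsinvt (by positivity)
      calc (2:ℝ) ^ (⌊(n : ℝ) * R⌋₊:ℕ) * (V * (1/s) ^ t * B0)
          ≤ (2:ℝ) ^ (⌊(n : ℝ) * R⌋₊:ℕ) * ((2:ℝ) ^ ((n:ℝ) * (ε/4)) * (2:ℝ) ^ ((n:ℝ) * (ε/4)) * B0) :=
            mul_le_mul_of_nonneg_left hinner h2mnn
        _ ≤ _ := mul_le_mul_of_nonneg_right F1 (by positivity)
    have hcollapse : (2:ℝ) ^ ((n:ℝ) * R) * ((2:ℝ) ^ ((n:ℝ) * (ε/4)) * (2:ℝ) ^ ((n:ℝ) * (ε/4)) * B0)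
        = (2:ℝ) ^ ((n:ℝ) * R + ((n:ℝ) * (ε/4) + ((n:ℝ) * (ε/4) + -((n:ℝ) * (H - ε))))) := by
      rw [hB0]
      rw [Real.rpow_add (by norm_num : (0:ℝ) < 2), Real.rpow_add (by norm_num : (0:ℝ) < 2),
        Real.rpow_add (by norm_num : (0:ℝ) < 2)]
      ring
    have hexple : (n:ℝ) * R + ((n:ℝ) * (ε/4) + ((n:ℝ) * (ε/4) + -((n:ℝ) * (H - ε)))) ≤ (-2 : ℝ) := by
      rw [hHε]
      have h20 : 4 < (n:ℝ) * ε := by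
        rw [div_lt_iff₀ hε] at hnε
        linarith
      have h21 : (n:ℝ) * R + ((n:ℝ) * (ε/4) + ((n:ℝ) * (ε/4) + -((n:ℝ) * (R + ε))))
          = -((n:ℝ) * ε) / 2 := by ring
      rw [h21]
      linarith
    have hfinal : (2:ℝ) ^ ((n:ℝ) * R + ((n:ℝ) * (ε/4) + ((n:ℝ) * (ε/4) + -((n:ℝ) * (H - ε))))) ≤ 1/4 := by
      calc (2:ℝ) ^ ((n:ℝ) * R + ((n:ℝ) * (ε/4) + ((n:ℝ) * (ε/4) + -((n:ℝ) * (H - ε)))))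
          ≤ (2:ℝ) ^ (-2 : ℝ) := Real.rpow_le_rpow_of_exponent_le one_le_two hexple
        _ = 1/4 := by
            rw [show (-2 : ℝ) = ((-2 : ℤ) : ℝ) by norm_num, Real.rpow_intCast]
            norm_num
    calc ∑ xn ∈ Bad2, P xn ≤ _ := h2m
      _ ≤ _ := Fmul
      _ = _ := hcollapse
      _ ≤ 1/4 := hfinal
  -- Step D
  have stepD : ∑ xn ∈ Bad, P xn ≤ 1/2 := by linarith
  have hnotBad : 1/2 ≤ ∑ xn ∈ Finset.univ.filter (fun xn : Fin n → X => ¬ mc xn ≤ t), P xn := by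
    have hsplit := Finset.sum_filter_add_sum_filter_not Finset.univ
      (fun xn : Fin n → X => mc xn ≤ t) P
    rw [hPsum] at hsplit
    rw [hBad] at stepD
    linarith
  -- Step E : swap sums
  have swap : (∑ i : Fin n, ∑ xn ∈ Finset.univ.filter
        (fun xn : Fin n → X => D (C xn) i ≠ xn i), P xn)
      = ∑ xn : Fin n → X, (mc xn : ℝ) * P xn := by
    simp only [Finset.sum_filter]
    rw [Finset.sum_comm]
    refine Finset.sum_congr rfl fun xn _ => ?_
    rw [← Finset.sum_filter, Finset.sum_const, nsmul_eq_mul]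
  have main1 : (n:ℝ) * (α/2) ≤ ∑ xn : Fin n → X, (mc xn : ℝ) * P xn := by
    have h5 : ∑ xn ∈ Finset.univ.filter (fun xn : Fin n → X => ¬ mc xn ≤ t), (mc xn : ℝ) * P xn
        ≤ ∑ xn : Fin n → X, (mc xn : ℝ) * P xn :=
      Finset.sum_le_sum_of_subset_of_nonneg (Finset.subset_univ _)
        (fun xn _ _ => mul_nonneg (Nat.cast_nonneg _) (hPnn xn))
    have h6 : ∀ xn ∈ Finset.univ.filter (fun xn : Fin n → X => ¬ mc xn ≤ t),
        ((t:ℝ) + 1) * P xn ≤ (mc xn : ℝ) * P xn := by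
      intro xn hxn
      rw [Finset.mem_filter] at hxn
      have h11 : t + 1 ≤ mc xn := by omega
      have h12 : ((t:ℝ) + 1) ≤ (mc xn : ℝ) := by exact_mod_cast h11
      exact mul_le_mul_of_nonneg_right h12 (hPnn xn)
    have h7 : ((t:ℝ) + 1) * ∑ xn ∈ Finset.univ.filter (fun xn : Fin n → X => ¬ mc xn ≤ t), P xn
        ≤ ∑ xn ∈ Finset.univ.filter (fun xn : Fin n → X => ¬ mc xn ≤ t), (mc xn : ℝ) * P xn := by
      rw [Finset.mul_sum]
      exact Finset.sum_le_sum h6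
    have h8 : α * (n:ℝ) ≤ (t:ℝ) + 1 := by
      rw [ht]
      push_cast
      exact (Nat.lt_floor_add_one _).le
    have ht0 : (0:ℝ) ≤ (t:ℝ) + 1 := by positivity
    have h13 : α * (n:ℝ) * (1/2) ≤ ((t:ℝ) + 1)
        * ∑ xn ∈ Finset.univ.filter (fun xn : Fin n → X => ¬ mc xn ≤ t), P xn := by
      apply mul_le_mul h8 hnotBad (by norm_num) ht0
    calc (n:ℝ) * (α/2) = α * (n:ℝ) * (1/2) := by ring
      _ ≤ _ := h13
      _ ≤ _ := h7
      _ ≤ _ := h5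
  constructor
  · rw [swap]
    exact main1
  · have hne : (Finset.univ : Finset (Fin n)).Nonempty := ⟨⟨0, hn0⟩, Finset.mem_univ _⟩
    have hsum : ∑ _i : Fin n, (α/2 : ℝ) ≤ ∑ i : Fin n, ∑ xn ∈ Finset.univ.filter
        (fun xn : Fin n → X => D (C xn) i ≠ xn i), P xn := by
      rw [Finset.sum_const, Finset.card_univ, Fintype.card_fin, nsmul_eq_mul, swap]
      exact main1
    obtain ⟨i, -, hi⟩ := Finset.exists_le_of_sum_le hne hsum
    exact ⟨i, hi⟩
end

section
/- Main converse (full-support, single-letter form of the key step): let p_{XY} be X-confusable, X^n, Y^n i.i.d. ∼ p_{XY}, C any encoding of X^n, i ∈ [n], I_i a set of codeword positions, c a realization of C_{I_i}(X^n), and x̄ any element of X. Then for any estimator X̂_i(C_{I_i}, Y^n): P[X̂_i(C_{I_i},Y^n) ≠ X_i, C_{I_i}(X^n) = c] ≥ P[X_i = x̄, X̃_i ≠ x̄, C_{I_i}(X^n) = C_{I_i}(X̃^n) = c], where X̃^n is drawn conditionally i.i.d. from p_{X|Y}(·|Y_j) given Y^n (i.e., X^n − Y^n − X̃^n is a Markov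 chain with identical conditionals). -/
attribute [local instance] Classical.propDecidable

/-- Key step of the main converse: for an `X`-confusable source, any estimator of
`X_i` from the probed codeword bits `C_{I}` (restricted to pattern `c`) and the
full side information `Y^n` satisfies
`P[X̂_i ≠ X_i, C_I(X^n) = c] ≥ P[X_i = x̄, X̃_i ≠ x̄, C_I(X^n) = C_I(X̃^n) = c]`,
where `X^n − Y^n − X̃^n` is a Markov chain with identical conditionals. -/
theorem stmt15 {X Y : Type*} [Fintype X] [Fintype Y] (n k : ℕ)
    (p : X → Y → ℝ) (hp : ∀ x y, 0 ≤ p x y) (hsum : ∑ x, ∑ y, p x y = 1)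
    (hY : ∀ y, 0 < ∑ x, p x y)
    (hconf : ∀ x1 x2 : X, ∃ y : Y, 0 < p x1 y ∧ 0 < p x2 y)
    (C : (Fin n → X) → Fin k → Bool) (I : Finset (Fin k)) (c : Fin k → Bool)
    (i : Fin n) (xb : X)
    (Est : (Fin k → Bool) → (Fin n → Y) → X)
    (hloc : ∀ (b b' : Fin k → Bool) (yn : Fin n → Y),
      (∀ j ∈ I, b j = b' j) → Est b yn = Est b' yn) :
    (∑ t ∈ Finset.univ.filter
        (fun t : (Fin n → X) × (Fin n → Y) × (Fin n → X) =>
          t.1 i = xb ∧ t.2.2 i ≠ xb ∧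
            (∀ j ∈ I, C t.1 j = c j) ∧ ∀ j ∈ I, C t.2.2 j = c j),
        (∏ j, p (t.1 j) (t.2.1 j)) *
          ∏ j, p (t.2.2 j) (t.2.1 j) / ∑ x, p x (t.2.1 j)) ≤
      ∑ t ∈ Finset.univ.filter
        (fun t : (Fin n → X) × (Fin n → Y) =>
          Est (C t.1) t.2 ≠ t.1 i ∧ ∀ j ∈ I, C t.1 j = c j),
        ∏ j, p (t.1 j) (t.2 j) := by
  classical
  have hW : ∀ (x : Fin n → X) (y : Fin n → Y), (0:ℝ) ≤ ∏ j, p (x j) (y j) :=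
    fun x y => Finset.prod_nonneg fun j _ => hp _ _
  have hSpos : ∀ y : Fin n → Y, (0:ℝ) < ∏ j, ∑ x, p x (y j) :=
    fun y => Finset.prod_pos fun j _ => hY _
  have hsumW : ∀ y : Fin n → Y,
      (∑ x : Fin n → X, ∏ j, p (x j) (y j)) = ∏ j, ∑ x, p x (y j) := by
    intro y
    rw [Finset.prod_univ_sum, Fintype.piFinset_univ]
  have hL : (∑ t ∈ Finset.univ.filter
        (fun t : (Fin n → X) × (Fin n → Y) × (Fin n → X) =>
          t.1 i = xb ∧ t.2.2 i ≠ xb ∧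
            (∀ j ∈ I, C t.1 j = c j) ∧ ∀ j ∈ I, C t.2.2 j = c j),
        (∏ j, p (t.1 j) (t.2.1 j)) *
          ∏ j, p (t.2.2 j) (t.2.1 j) / ∑ x, p x (t.2.1 j)) =
      ∑ y : Fin n → Y,
        (∑ x : Fin n → X, if x i = xb ∧ (∀ j ∈ I, C x j = c j)
            then ∏ j, p (x j) (y j) else 0) *
        ((∑ x : Fin n → X, if x i ≠ xb ∧ (∀ j ∈ I, C x j = c j)
            then ∏ j, p (x j) (y j) else 0) / ∏ j, ∑ x, p x (y j)) := by
    rw [Finset.sum_filter]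
    simp only [Fintype.sum_prod_type]
    rw [Finset.sum_comm]
    apply Finset.sum_congr rfl
    intro y _
    rw [Finset.sum_div, Finset.sum_mul_sum]
    apply Finset.sum_congr rfl; intro x _
    apply Finset.sum_congr rfl; intro xt _
    rw [Finset.prod_div_distrib]
    by_cases h1 : x i = xb ∧ (∀ j ∈ I, C x j = c j) <;>
      by_cases h2 : xt i ≠ xb ∧ (∀ j ∈ I, C xt j = c j)
    · rw [if_pos ⟨h1.1, h2.1, h1.2, h2.2⟩, if_pos h1, if_pos h2]
    · rw [if_neg fun hc => h2 ⟨hc.2.1, hc.2.2.2⟩, if_neg h2, zero_div, mul_zero]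
    · rw [if_neg fun hc => h1 ⟨hc.1, hc.2.2.1⟩, if_neg h1, zero_mul]
    · rw [if_neg fun hc => h1 ⟨hc.1, hc.2.2.1⟩, if_neg h1, zero_mul]
  have hR : (∑ t ∈ Finset.univ.filter
        (fun t : (Fin n → X) × (Fin n → Y) =>
          Est (C t.1) t.2 ≠ t.1 i ∧ ∀ j ∈ I, C t.1 j = c j),
        ∏ j, p (t.1 j) (t.2 j)) =
      ∑ y : Fin n → Y, ∑ x : Fin n → X,
        if Est (C x) y ≠ x i ∧ (∀ j ∈ I, C x j = c j)
          then ∏ j, p (x j) (y j) else 0 := by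
    rw [Finset.sum_filter]
    simp only [Fintype.sum_prod_type]
    rw [Finset.sum_comm]
  rw [hL, hR]
  apply Finset.sum_le_sum
  intro y _
  have hEst : ∀ x : Fin n → X, (∀ j ∈ I, C x j = c j) → Est (C x) y = Est c y :=
    fun x hx => hloc (C x) c y hx
  have hA1nn : (0:ℝ) ≤ ∑ x : Fin n → X,
      if x i = xb ∧ (∀ j ∈ I, C x j = c j) then ∏ j, p (x j) (y j) else 0 :=
    Finset.sum_nonneg fun x _ => by
      split_ifs
      · exact hW x y
      · exact le_rfl
  have hA2nn : (0:ℝ) ≤ ∑ x : Fin n → X,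
      if x i ≠ xb ∧ (∀ j ∈ I, C x j = c j) then ∏ j, p (x j) (y j) else 0 :=
    Finset.sum_nonneg fun x _ => by
      split_ifs
      · exact hW x y
      · exact le_rfl
  have hA1S : (∑ x : Fin n → X,
      if x i = xb ∧ (∀ j ∈ I, C x j = c j) then ∏ j, p (x j) (y j) else 0)
      ≤ ∏ j, ∑ x, p x (y j) := by
    rw [← hsumW y]
    apply Finset.sum_le_sum
    intro x _
    split_ifs
    · exact le_rfl
    · exact hW x y
  have hA2S : (∑ x : Fin n → X,
      if x i ≠ xb ∧ (∀ j ∈ I, C x j = c j) then ∏ j, p (x j) (y j) else 0)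
      ≤ ∏ j, ∑ x, p x (y j) := by
    rw [← hsumW y]
    apply Finset.sum_le_sum
    intro x _
    split_ifs
    · exact le_rfl
    · exact hW x y
  by_cases hE : Est c y = xb
  · have hAB : (∑ x : Fin n → X,
        if x i ≠ xb ∧ (∀ j ∈ I, C x j = c j) then ∏ j, p (x j) (y j) else 0)
        ≤ ∑ x : Fin n → X,
        if Est (C x) y ≠ x i ∧ (∀ j ∈ I, C x j = c j) then ∏ j, p (x j) (y j) else 0 := by
      apply Finset.sum_le_sum
      intro x _
      by_cases h : x i ≠ xb ∧ (∀ j ∈ I, C x j = c j)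
      · rw [if_pos h, if_pos]
        refine ⟨?_, h.2⟩
        rw [(hEst x h.2).trans hE]
        exact h.1.symm
      · rw [if_neg h]
        split_ifs
        · exact hW x y
        · exact le_rfl
    calc (∑ x : Fin n → X,
          if x i = xb ∧ (∀ j ∈ I, C x j = c j) then ∏ j, p (x j) (y j) else 0) *
        ((∑ x : Fin n → X,
          if x i ≠ xb ∧ (∀ j ∈ I, C x j = c j) then ∏ j, p (x j) (y j) else 0) /
          ∏ j, ∑ x, p x (y j))
        ≤ (∏ j, ∑ x, p x (y j)) *
        ((∑ x : Fin n → X,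
          if x i ≠ xb ∧ (∀ j ∈ I, C x j = c j) then ∏ j, p (x j) (y j) else 0) /
          ∏ j, ∑ x, p x (y j)) :=
          mul_le_mul_of_nonneg_right hA1S (div_nonneg hA2nn (hSpos y).le)
      _ = ∑ x : Fin n → X,
          if x i ≠ xb ∧ (∀ j ∈ I, C x j = c j) then ∏ j, p (x j) (y j) else 0 := by
          rw [mul_comm, div_mul_cancel₀ _ (ne_of_gt (hSpos y))]
      _ ≤ _ := hAB
  · have hAB : (∑ x : Fin n → X,
        if x i = xb ∧ (∀ j ∈ I, C x j = c j) then ∏ j, p (x j) (y j) else 0)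
        ≤ ∑ x : Fin n → X,
        if Est (C x) y ≠ x i ∧ (∀ j ∈ I, C x j = c j) then ∏ j, p (x j) (y j) else 0 := by
      apply Finset.sum_le_sum
      intro x _
      by_cases h : x i = xb ∧ (∀ j ∈ I, C x j = c j)
      · rw [if_pos h, if_pos]
        refine ⟨fun e => hE ((hEst x h.2).symm.trans (e.trans h.1)), h.2⟩
      · rw [if_neg h]
        split_ifs
        · exact hW x y
        · exact le_rfl
    calc (∑ x : Fin n → X,
          if x i = xb ∧ (∀ j ∈ I, C x j = c j) then ∏ j, p (x j) (y j) else 0) *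
        ((∑ x : Fin n → X,
          if x i ≠ xb ∧ (∀ j ∈ I, C x j = c j) then ∏ j, p (x j) (y j) else 0) /
          ∏ j, ∑ x, p x (y j))
        ≤ (∑ x : Fin n → X,
          if x i = xb ∧ (∀ j ∈ I, C x j = c j) then ∏ j, p (x j) (y j) else 0) * 1 :=
          mul_le_mul_of_nonneg_left ((div_le_one (hSpos y)).mpr hA2S) hA1nn
      _ = ∑ x : Fin n → X,
          if x i = xb ∧ (∀ j ∈ I, C x j = c j) then ∏ j, p (x j) (y j) else 0 := mul_one _
      _ ≤ _ := hAB
end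

section
/- Geometric rate-sum bound for the hierarchical scheme: with parameters ε_ℓ = ε_0/2^ℓ, b_ℓ = 16^ℓ b_0, n_ℓ = 4^{ℓ(ℓ+1)} b_0^{ℓ+1} (so n_ℓ = b_ℓ · n_{ℓ−1}, n_0 = b_0), and k_ℓ = ε_ℓ n_ℓ (β + c + (b_ℓ/n_ℓ)·log(e·2^ℓ/ε_0)) for ℓ ≥ 1 and k_0 = ⌈(R+ε_0) b_0⌉, the total number of bits probed up to level L satisfies Σ_{ℓ=0}^{L} (n_L/n_ℓ)·k_ℓ ≤ n_L (R + γ·ε_0) for a constant γ depending only on β, c, and b_0 (not on L or n), provided ε_0 b_0 is large enough. -/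
lemma aux_nat_le_pow (n : ℕ) : (n : ℝ) ≤ 2 * (3/2) ^ n := by
  induction n with
  | zero => norm_num
  | succ m ih =>
    have h1 : (1:ℝ) ≤ (3/2) ^ m := one_le_pow₀ (by norm_num)
    push_cast
    push_cast at ih
    rw [pow_succ]
    nlinarith

lemma aux_geom_sum (n : ℕ) : ∑ i ∈ Finset.range n, (3/4 : ℝ) ^ i ≤ 4 := by
  rw [geom_sum_eq (by norm_num : (3/4:ℝ) ≠ 1)]
  have h : (0:ℝ) ≤ (3/4:ℝ) ^ n := by positivity
  have h2 : (3/4:ℝ) ^ n ≤ 1 := pow_le_one₀ (by norm_num) (by norm_num)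
  rw [div_le_iff_of_neg (by norm_num : (3/4:ℝ) - 1 < 0)]
  nlinarith

/-- Geometric rate-sum bound for the hierarchical scheme: with
`ε_ℓ = ε0/2^ℓ`, `b_ℓ = 16^ℓ b0`, `n_ℓ = 4^{ℓ(ℓ+1)} b0^{ℓ+1}`,
`k_0 = ⌈(R+ε0)b0⌉` and
`k_ℓ = ε_ℓ n_ℓ (β + c + (b_ℓ/n_ℓ)·log₂(e·2^ℓ/ε0))` for `ℓ ≥ 1`,
there are constants `γ > 0` and `M` depending only on `β`, `c`, `b0` such that
whenever `ε0·b0 ≥ M`, for every number of levels `L`,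
`∑_{ℓ=0}^{L} (n_L/n_ℓ)·k_ℓ ≤ n_L·(R + γ·ε0)`. -/
theorem stmt19 (β c R : ℝ) (hβ : 0 < β) (hc : 0 < c) (hR : 0 < R)
    (b0 : ℕ) (hb0 : 2 ≤ b0) :
    ∃ γ M : ℝ, 0 < γ ∧
      ∀ ε0 : ℝ, 0 < ε0 → ε0 < 1 → M ≤ ε0 * b0 →
      ∀ L : ℕ,
        ∑ ℓ ∈ Finset.range (L + 1),
          (((4 : ℝ) ^ (L * (L + 1)) * (b0 : ℝ) ^ (L + 1)) /
              ((4 : ℝ) ^ (ℓ * (ℓ + 1)) * (b0 : ℝ) ^ (ℓ + 1))) *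
            (if ℓ = 0 then ((⌈(R + ε0) * (b0 : ℝ)⌉ : ℤ) : ℝ)
             else (ε0 / 2 ^ ℓ) * ((4 : ℝ) ^ (ℓ * (ℓ + 1)) * (b0 : ℝ) ^ (ℓ + 1)) *
               (β + c + (((16 : ℝ) ^ ℓ * (b0 : ℝ)) /
                   ((4 : ℝ) ^ (ℓ * (ℓ + 1)) * (b0 : ℝ) ^ (ℓ + 1))) *
                 Real.logb 2 (Real.exp 1 * 2 ^ ℓ / ε0))) ≤
          ((4 : ℝ) ^ (L * (L + 1)) * (b0 : ℝ) ^ (L + 1)) * (R + γ * ε0) := by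
  have hb0R : (2:ℝ) ≤ (b0:ℝ) := by exact_mod_cast hb0
  have hb0pos : (0:ℝ) < (b0:ℝ) := by linarith
  set A : ℝ := β + c + Real.logb 2 (Real.exp 1 * b0) with hA_def
  have hebig : (1:ℝ) ≤ Real.exp 1 * b0 := by
    nlinarith [Real.one_le_exp (zero_le_one (α := ℝ))]
  have hlogb_nonneg : 0 ≤ Real.logb 2 (Real.exp 1 * b0) :=
    Real.logb_nonneg one_lt_two hebig
  have hA : 0 < A := by simp only [hA_def]; linarith
  refine ⟨2 + 4 * (A + 2), 1, by linarith, ?_⟩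
  intro ε0 hε0 hε1 hM L
  have hεb : (1:ℝ) ≤ ε0 * b0 := hM
  set nL : ℝ := (4 : ℝ) ^ (L * (L + 1)) * (b0 : ℝ) ^ (L + 1) with hnL_def
  have hnL : 0 < nL := by positivity
  rw [Finset.sum_range_succ']
  have hexp : (0:ℝ) < Real.exp 1 := Real.exp_pos 1
  refine le_trans (add_le_add (b := nL * (4 * (A + 2) * ε0))
      (d := nL * (R + 2 * ε0)) ?_ ?_) (le_of_eq (by ring))
  · -- tail: levels 1..L
    refine le_trans (Finset.sum_le_sum (g := fun i =>
        nL * (ε0 * (A + 2)) * (3/4) ^ (i + 1)) fun i _ => ?_) ?_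
    · -- pointwise bound
      rw [if_neg (Nat.succ_ne_zero i)]
      set nl : ℝ := (4 : ℝ) ^ ((i+1) * (i + 1 + 1)) * (b0 : ℝ) ^ (i + 1 + 1) with hnl_def
      have hnl : 0 < nl := by positivity
      have h2pow : (0:ℝ) < (2:ℝ) ^ (i+1) := by positivity
      have hfold : ∀ B : ℝ, nL / nl * (ε0 / 2 ^ (i+1) * nl * B)
          = nL * (ε0 / 2 ^ (i+1) * B) := by
        intro B; field_simp
      rw [hfold]
      -- bound the bracket
      have hfrac : (16:ℝ) ^ (i+1) * (b0:ℝ) / nl ≤ 1 := by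
        rw [div_le_one hnl, hnl_def]
        have h16 : (16:ℝ) ^ (i+1) = 4 ^ (2*(i+1)) := by
          rw [pow_mul]; norm_num
        rw [h16]
        have h4 : (4:ℝ) ^ (2*(i+1)) ≤ 4 ^ ((i+1)*(i+1+1)) :=
          pow_le_pow_right₀ (by norm_num) (by nlinarith)
        have hb : (b0:ℝ) ≤ (b0:ℝ) ^ (i+1+1) :=
          le_self_pow₀ (by linarith) (Nat.succ_ne_zero _)
        exact mul_le_mul h4 hb hb0pos.le (by positivity)
      have hargpos : (0:ℝ) < Real.exp 1 * 2 ^ (i+1) / ε0 := by positivity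
      have hlog0 : 0 ≤ Real.logb 2 (Real.exp 1 * 2 ^ (i+1) / ε0) := by
        refine Real.logb_nonneg one_lt_two ?_
        rw [le_div_iff₀ hε0]
        nlinarith [Real.one_le_exp (zero_le_one (α := ℝ)),
          one_le_pow₀ (by norm_num : (1:ℝ) ≤ 2) (n := i+1)]
      have hlog1 : Real.logb 2 (Real.exp 1 * 2 ^ (i+1) / ε0)
          ≤ Real.logb 2 (Real.exp 1 * b0) + (i+1 : ℕ) := by
        have harg : Real.exp 1 * 2 ^ (i+1) / ε0 ≤ (Real.exp 1 * b0) * 2 ^ (i+1) := by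
          rw [div_le_iff₀ hε0]
          nlinarith [mul_pos hexp h2pow]
        calc Real.logb 2 (Real.exp 1 * 2 ^ (i+1) / ε0)
            ≤ Real.logb 2 ((Real.exp 1 * b0) * 2 ^ (i+1)) :=
              Real.logb_le_logb_of_le one_lt_two hargpos harg
          _ = Real.logb 2 (Real.exp 1 * b0) + (i+1 : ℕ) := by
              rw [Real.logb_mul (by positivity) (by positivity),
                Real.logb_pow, Real.logb_self_eq_one one_lt_two]
              push_cast; ring
      have hmul : (16:ℝ) ^ (i+1) * (b0:ℝ) / nl *
          Real.logb 2 (Real.exp 1 * 2 ^ (i+1) / ε0)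
          ≤ Real.logb 2 (Real.exp 1 * b0) + (i+1 : ℕ) := by
        calc (16:ℝ) ^ (i+1) * (b0:ℝ) / nl * Real.logb 2 (Real.exp 1 * 2 ^ (i+1) / ε0)
            ≤ 1 * Real.logb 2 (Real.exp 1 * 2 ^ (i+1) / ε0) :=
              mul_le_mul_of_nonneg_right hfrac hlog0
          _ = Real.logb 2 (Real.exp 1 * 2 ^ (i+1) / ε0) := one_mul _
          _ ≤ _ := hlog1
      have hB : β + c + (16:ℝ) ^ (i+1) * (b0:ℝ) / nl *
          Real.logb 2 (Real.exp 1 * 2 ^ (i+1) / ε0) ≤ A + (i+1 : ℕ) := by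
        simp only [hA_def]; linarith
      have hkey : A + ((i+1 : ℕ) : ℝ) ≤ (A + 2) * (3/2) ^ (i+1) := by
        have hnat := aux_nat_le_pow (i+1)
        have hge1 : (1:ℝ) ≤ (3/2) ^ (i+1) := one_le_pow₀ (by norm_num)
        nlinarith
      have h2 : ε0 / 2 ^ (i+1) * (A + ((i+1:ℕ):ℝ)) ≤ ε0 * (A + 2) * (3/4) ^ (i+1) := by
        have h34 : (3/4:ℝ) ^ (i+1) = (3/2) ^ (i+1) / 2 ^ (i+1) := by
          rw [← div_pow]; norm_num
        rw [h34]
        calc ε0 / 2 ^ (i+1) * (A + ((i+1:ℕ):ℝ))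
            = ε0 * (A + ((i+1:ℕ):ℝ)) / 2 ^ (i+1) := by ring
          _ ≤ ε0 * ((A + 2) * (3/2) ^ (i+1)) / 2 ^ (i+1) := by
              gcongr
          _ = ε0 * (A + 2) * ((3/2) ^ (i+1) / 2 ^ (i+1)) := by ring
      calc nL * (ε0 / 2 ^ (i+1) * (β + c + (16:ℝ) ^ (i+1) * (b0:ℝ) / nl *
              Real.logb 2 (Real.exp 1 * 2 ^ (i+1) / ε0)))
          ≤ nL * (ε0 / 2 ^ (i+1) * (A + ((i+1:ℕ):ℝ))) := by
            apply mul_le_mul_of_nonneg_left _ hnL.le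
            exact mul_le_mul_of_nonneg_left hB (by positivity)
        _ ≤ nL * (ε0 * (A + 2) * (3/4) ^ (i+1)) := mul_le_mul_of_nonneg_left h2 hnL.le
        _ = nL * (ε0 * (A + 2)) * (3/4) ^ (i+1) := by ring
    · -- geometric sum
      rw [← Finset.mul_sum]
      have hsum : ∑ i ∈ Finset.range L, (3/4:ℝ) ^ (i+1) ≤ 4 := by
        refine le_trans (Finset.sum_le_sum fun i _ => ?_) (aux_geom_sum L)
        exact pow_le_pow_of_le_one (by norm_num) (by norm_num) (Nat.le_succ i)
      calc nL * (ε0 * (A + 2)) * ∑ i ∈ Finset.range L, (3/4:ℝ) ^ (i+1)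
          ≤ nL * (ε0 * (A + 2)) * 4 :=
            mul_le_mul_of_nonneg_left hsum (by positivity)
        _ = nL * (4 * (A + 2) * ε0) := by ring
  · -- head: level 0
    rw [if_pos rfl]
    have hceil : ((⌈(R + ε0) * (b0:ℝ)⌉ : ℤ) : ℝ) ≤ (R + ε0) * b0 + 1 :=
      (Int.ceil_lt_add_one _).le
    have hceilnn : (0:ℝ) ≤ ((⌈(R + ε0) * (b0:ℝ)⌉ : ℤ) : ℝ) := by
      have : (0:ℝ) ≤ (R + ε0) * b0 := by positivity
      exact le_trans this (Int.le_ceil _)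
    have hden : ((4:ℝ) ^ (0 * (0+1)) * (b0:ℝ) ^ (0+1)) = (b0:ℝ) := by norm_num
    rw [hden]
    calc nL / (b0:ℝ) * ((⌈(R + ε0) * (b0:ℝ)⌉ : ℤ) : ℝ)
        ≤ nL / (b0:ℝ) * ((R + ε0) * b0 + 1) :=
          mul_le_mul_of_nonneg_left hceil (by positivity)
      _ ≤ nL * (R + 2 * ε0) := by
          rw [div_mul_eq_mul_div, div_le_iff₀ hb0pos]
          nlinarith [mul_le_mul_of_nonneg_left hεb hnL.le]
end
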